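/- arXiv:1212.1243 — 7 statements merged into one kernel-verified Lean document; each statement's English description precedes it below -/
import Mathlib

section
/- With notation as above, π is the unique projector of End_R(H) onto L whose kernel equals { φ ∈ End_R(H) : [φ, v] = 0 for all v ∈ L }; in particular π is independent of the choice of basis of L. -/
/-- With notation as in Statement 0 (normalized trace pairing `B` on
`End_R(H)` restricting to the bilinear form of a non-degenerate quadratic space
`L ⊆ End_R(H)`, basis `(eᵢ)` of `L`, `Ae i = A eᵢ` with `A` the inverse Gram matrix, and
`π(φ) = ∑ i, B(φ, eᵢ) • (A eᵢ)`), the map `π` is the unique projector of `End_R(H)` onto `L`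
whose kernel equals `{φ : B(φ, v) = 0 for all v ∈ L}`; in particular it is independent of the
choice of basis. -/
theorem stmt_1 {R H : Type*} [CommRing R] [Invertible (2 : R)]
    [AddCommGroup H] [Module R H] [Module.Free R H] [Module.Finite R H]
    (L : Submodule R (Module.End R H))
    (Q : QuadraticForm R L)
    (hnd : (QuadraticMap.polarBilin Q).Nondegenerate)
    (n : ℕ)
    (B : LinearMap.BilinForm R (Module.End R H))
    (hBtr : ∀ φ ψ : Module.End R H, B φ ψ = (⅟(2 : R)) ^ n * LinearMap.trace R H (φ * ψ))
    (hBL : ∀ x y : L, B (x : Module.End R H) (y : Module.End R H) = QuadraticMap.polarBilin Q x y)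
    (m : ℕ) (e : Module.Basis (Fin m) R L) (Ae : Fin m → L)
    (hA : ∀ i j, QuadraticMap.polarBilin Q (Ae i) (e j) = if i = j then 1 else 0)
    (π : Module.End R (Module.End R H))
    (hπ : ∀ φ : Module.End R H, π φ = ∑ i, B φ ((e i : L) : Module.End R H) • ((Ae i : L) : Module.End R H)) :
    (π ∘ₗ π = π ∧ LinearMap.range π = L ∧
      (∀ φ : Module.End R H, π φ = 0 ↔ ∀ v ∈ L, B φ v = 0)) ∧
    ∀ π' : Module.End R (Module.End R H),
      (π' ∘ₗ π' = π' ∧ LinearMap.range π' = L ∧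
        (∀ φ : Module.End R H, π' φ = 0 ↔ ∀ v ∈ L, B φ v = 0)) → π' = π := by

  -- `π φ` lands in `L`
  have hL : ∀ φ : Module.End R H, ∃ x : L, π φ = (x : Module.End R H) := by
    intro φ
    refine ⟨∑ i, B φ ((e i : L) : Module.End R H) • Ae i, ?_⟩
    rw [hπ]
    push_cast
    rfl
  -- a functional vanishing on the basis vanishes on `L`
  have keyB : ∀ φ : Module.End R H,
      (∀ j, B φ ((e j : L) : Module.End R H) = 0) → ∀ v ∈ L, B φ v = 0 := by
    intro φ hφ v hv
    have h0 : (B φ).comp L.subtype = 0 := Module.Basis.ext e (fun j => hφ j)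
    have := LinearMap.congr_fun h0 ⟨v, hv⟩
    simpa using this
  have keyPolar : ∀ x : L, (∀ j, QuadraticMap.polarBilin Q x (e j) = 0) → x = 0 := by
    intro x hx
    apply hnd.1 x
    intro y
    have h0 : (QuadraticMap.polarBilin Q x : L →ₗ[R] R) = 0 := Module.Basis.ext e (fun j => hx j)
    exact LinearMap.congr_fun h0 y
  have hBπ : ∀ (φ : Module.End R H) (j : Fin m),
      B (π φ) ((e j : L) : Module.End R H) = B φ ((e j : L) : Module.End R H) := by
    intro φ j
    rw [hπ]
    rw [map_sum, LinearMap.sum_apply]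
    have : ∀ i, (B (B φ ((e i : L) : Module.End R H) • ((Ae i : L) : Module.End R H)))
        ((e j : L) : Module.End R H)
        = B φ ((e i : L) : Module.End R H) * (if i = j then 1 else 0) := by
      intro i
      rw [map_smul, LinearMap.smul_apply, hBL, hA]
      simp [smul_eq_mul]
    rw [Finset.sum_congr rfl (fun i _ => this i)]
    simp
  have hfix : ∀ x : L, π (x : Module.End R H) = (x : Module.End R H) := by
    intro x
    obtain ⟨y, hy⟩ := hL (x : Module.End R H)
    have hyx : y = x := by
      have := keyPolar (y - x) ?_
      · linear_combination (norm := module) this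
      intro j
      have h1 : QuadraticMap.polarBilin Q y (e j) = QuadraticMap.polarBilin Q x (e j) := by
        rw [← hBL, ← hBL, ← hy, hBπ]
      simp [map_sub, h1]
    rw [hy, hyx]
  have hmain : π ∘ₗ π = π ∧ LinearMap.range π = L ∧
      (∀ φ : Module.End R H, π φ = 0 ↔ ∀ v ∈ L, B φ v = 0) := by
    refine ⟨?_, ?_, ?_⟩
    · ext φ
      obtain ⟨y, hy⟩ := hL φ
      simp only [LinearMap.comp_apply, hy, hfix]
    · apply le_antisymm
      · rintro _ ⟨φ, rfl⟩
        obtain ⟨y, hy⟩ := hL φ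
        rw [hy]; exact y.2
      · intro x hx
        exact ⟨x, hfix ⟨x, hx⟩⟩
    · intro φ
      constructor
      · intro h
        apply keyB
        intro j
        rw [← hBπ, h, map_zero, LinearMap.zero_apply]
      · intro h
        rw [hπ]
        have : ∀ i, B φ ((e i : L) : Module.End R H) = 0 := fun i => h _ (e i).2
        simp [this]
  refine ⟨hmain, ?_⟩
  intro π' ⟨h1, h2, h3⟩
  have hfix' : ∀ x : Module.End R H, x ∈ L → π' x = x := by
    intro x hx
    rw [← h2] at hx
    obtain ⟨y, rfl⟩ := hx
    exact LinearMap.congr_fun h1 y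
  refine LinearMap.ext fun φ => ?_
  obtain ⟨y, hy⟩ := hL φ
  have horth : π' (φ - π φ) = 0 := by
    rw [h3]
    apply keyB
    intro j
    rw [map_sub, LinearMap.sub_apply, hBπ, sub_self]
  have heq : π' φ = π' (π φ) := by
    have h0 := map_sub π' φ (π φ)
    rw [horth] at h0
    exact sub_eq_zero.mp h0.symm
  rw [heq, hy, hfix' _ y.2]
end

section
/- Let (M,q) be a non-degenerate quadratic space over a field κ of characteristic ≠ 2 and N ⊂ M a subspace. Set 𝔞_N = { f ∈ Hom(N,M) : [f(v),w]_q + [v,f(w)]_q = 0 for all v,w ∈ N }. Then the restriction map Lie(SO(M)) → 𝔞_N, X ↦ X|_N, is surjective. -/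
/-- Let `(M, q)` be a non-degenerate quadratic space over a field `κ` of
characteristic ≠ 2 and `N ⊆ M` a subspace.  Set
`𝔞_N = { f ∈ Hom(N, M) : [f v, w]_q + [v, f w]_q = 0 for all v, w ∈ N }`.
Then the restriction map `Lie(SO(M)) → 𝔞_N`, `X ↦ X|_N`, is surjective: every such `f`
extends to a skew-adjoint endomorphism `X` of `M`. -/
theorem stmt_2 {κ M : Type*} [Field κ] (hchar : (2 : κ) ≠ 0)
    [AddCommGroup M] [Module κ M] [FiniteDimensional κ M]
    (Q : QuadraticForm κ M)
    (hnd : (QuadraticMap.polarBilin Q).Nondegenerate)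
    (N : Submodule κ M)
    (f : N →ₗ[κ] M)
    (hf : ∀ v w : N,
      QuadraticMap.polarBilin Q (f v) (w : M) + QuadraticMap.polarBilin Q (v : M) (f w) = 0) :
    ∃ X : Module.End κ M,
      (∀ v w : M, QuadraticMap.polarBilin Q (X v) w + QuadraticMap.polarBilin Q v (X w) = 0) ∧
      ∀ v : N, X (v : M) = f v := by
  set B : LinearMap.BilinForm κ M := QuadraticMap.polarBilin Q with hB
  have hsymm : ∀ v w : M, B v w = B w v := fun v w => QuadraticMap.polar_comm Q v w
  obtain ⟨P, hP⟩ := N.exists_isCompl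
  set π := N.projectionOnto P hP with hπ
  -- the alternating extension C of (v,w) ↦ B (f v) w
  set C : M →ₗ[κ] M →ₗ[κ] κ :=
    LinearMap.mk₂ κ (fun v w => B (f (π v)) w - B (f (π w)) (v - ↑(π v)))
      (by intro a b w; simp [map_add, add_sub_add_comm])
      (by intro c a w; simp [smul_sub, mul_sub])
      (by intro v a b; simp [map_add]; ring)
      (by intro c v w; simp [smul_sub, mul_sub]) with hC
  have hCskew : ∀ v w : M, C v w + C w v = 0 := by
    intro v w
    simp only [hC, LinearMap.mk₂_apply]
    have h2 : B (f (π v)) (w - ↑(π w)) = B (f (π v)) w - B (f (π v)) (↑(π w)) :=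
      map_sub _ _ _
    have h3 : B (f (π w)) (v - ↑(π v)) = B (f (π w)) v - B (f (π w)) (↑(π v)) :=
      map_sub _ _ _
    have h1 := hf (π v) (π w)
    have hsv : B (↑(π v) : M) (f (π w)) = B (f (π w)) (↑(π v)) := hsymm _ _
    rw [hsv] at h1
    linear_combination h1 - h2 - h3
  have hCN : ∀ v : N, C (↑v) = B (f v) := by
    intro v
    ext w
    simp only [hC, LinearMap.mk₂_apply]
    rw [hπ, Submodule.projectionOnto_apply_left hP v]
    simp
  set X : Module.End κ M := (LinearMap.BilinForm.toDual B hnd).symm.toLinearMap ∘ₗ C with hX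
  have hBX : ∀ v w : M, B (X v) w = C v w := by
    intro v w
    simp only [hX, LinearMap.comp_apply, LinearEquiv.coe_coe]
    exact LinearMap.BilinForm.apply_toDual_symm_apply (C v) w
  refine ⟨X, ?_, ?_⟩
  · intro v w
    rw [hBX v w, hsymm v (X w), hBX w v]
    exact hCskew v w
  · intro v
    refine eq_of_sub_eq_zero (hnd.1 _ fun w => ?_)
    rw [map_sub, LinearMap.sub_apply, hBX, hCN, sub_self]
end

section
/- Let 𝒪 be a discrete valuation ring of mixed characteristic (0,p) with residue field k, and (M,q) a quadratic space over 𝒪 such that M[1/p] is non-degenerate. Assume the discriminant group disc(M) = M^∨/M is a k-vector space (i.e. killed by p). Then the assignment M' ↦ M'/M is a bijection between lattices M' ⊂ M[1/p] containing M on which q takes values in 𝒪, and subspaces of disc(M) that are isotropic for the induced 𝒪[1/p]/𝒪-valued quadratic form q̄. -/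
open QuadraticMap

/-- The dual lattice `M^∨ = { x ∈ V : [x, M]_q ⊆ 𝒪 }` of an `𝒪`-lattice `M` in a quadratic
space `(V, Q)` over the fraction field `K` of `𝒪`. -/
def dualLattice (𝒪 : Type*) {K V : Type*} [CommRing 𝒪] [Field K] [Algebra 𝒪 K]
    [AddCommGroup V] [Module K V] [Module 𝒪 V] [IsScalarTower 𝒪 K V]
    (Q : QuadraticForm K V) (M : Submodule 𝒪 V) : Submodule 𝒪 V where
  carrier := {x | ∀ m ∈ M, ∃ a : 𝒪, algebraMap 𝒪 K a = polarBilin Q x m}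
  add_mem' := by
    intro x y hx hy m hm
    obtain ⟨a, ha⟩ := hx m hm
    obtain ⟨b, hb⟩ := hy m hm
    exact ⟨a + b, by simp [map_add, ha, hb]⟩
  zero_mem' := by
    intro m hm
    exact ⟨0, by simp⟩
  smul_mem' := by
    intro c x hx m hm
    obtain ⟨a, ha⟩ := hx m hm
    refine ⟨c * a, ?_⟩
    have h1 : (c • x : V) = (algebraMap 𝒪 K c) • x := (algebraMap_smul K c x).symm
    rw [map_mul, ha, h1, LinearMap.map_smul, LinearMap.smul_apply, smul_eq_mul]

/-- Let `𝒪` be a discrete valuation ring of mixed characteristic `(0, p)`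
with fraction field `K`, and `(M, q)` a full lattice in a non-degenerate quadratic space
`(V, Q)` over `K` on which `q` takes values in `𝒪`.  Assume the discriminant group
`disc(M) = M^∨/M` is killed by `p` (i.e. is a vector space over the residue field `k`).
Then the assignment `M' ↦ M'/M` is a bijection between lattices `M' ⊆ M[1/p]` containing `M`
on which `q` takes values in `𝒪`, and subspaces of `disc(M)` that are isotropic for the
induced `K/𝒪`-valued quadratic form `q̄`. -/
theorem stmt_4 (𝒪 : Type*) [CommRing 𝒪] [IsDomain 𝒪] [IsDiscreteValuationRing 𝒪]
    (K : Type*) [Field K] [Algebra 𝒪 K] [IsFractionRing 𝒪 K]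
    (p : ℕ) [Fact p.Prime] [CharZero 𝒪]
    (hp : (p : 𝒪) ∈ IsLocalRing.maximalIdeal 𝒪)
    (V : Type*) [AddCommGroup V] [Module K V] [Module 𝒪 V] [IsScalarTower 𝒪 K V]
    (Q : QuadraticForm K V)
    (hnd : (QuadraticMap.polarBilin Q).Nondegenerate)
    (M : Submodule 𝒪 V) (hfg : M.FG)
    (hfull : Submodule.span K (M : Set V) = ⊤)
    (hint : ∀ x ∈ M, ∃ a : 𝒪, algebraMap 𝒪 K a = Q x)
    (hdisc : ∀ x ∈ dualLattice 𝒪 Q M, (p : 𝒪) • x ∈ M) :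
    Set.BijOn
      (fun N : Submodule 𝒪 V =>
        Submodule.map (Submodule.mkQ (M.comap (dualLattice 𝒪 Q M).subtype))
          (N.comap (dualLattice 𝒪 Q M).subtype))
      {N : Submodule 𝒪 V | M ≤ N ∧ (∀ x ∈ N, ∃ nn : ℕ, (p : 𝒪) ^ nn • x ∈ M) ∧
        (∀ x ∈ N, ∃ a : 𝒪, algebraMap 𝒪 K a = Q x)}
      {S : Submodule 𝒪 (↥(dualLattice 𝒪 Q M) ⧸ M.comap (dualLattice 𝒪 Q M).subtype) |
        ∀ x : ↥(dualLattice 𝒪 Q M),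
          (Submodule.Quotient.mk x : ↥(dualLattice 𝒪 Q M) ⧸ M.comap (dualLattice 𝒪 Q M).subtype) ∈ S →
            ∃ a : 𝒪, algebraMap 𝒪 K a = Q (x : V)} := by

  have hsub : ∀ N : Submodule 𝒪 V, M ≤ N → (∀ x ∈ N, ∃ a : 𝒪, algebraMap 𝒪 K a = Q x) →
      N ≤ dualLattice 𝒪 Q M := by
    intro N hMN hQN x hx m hm
    obtain ⟨a, ha⟩ := hQN (x + m) (N.add_mem hx (hMN hm))
    obtain ⟨b, hb⟩ := hQN x hx
    obtain ⟨c, hc⟩ := hint m hm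
    refine ⟨a - b - c, ?_⟩
    simp only [_root_.map_sub, ha, hb, hc, polarBilin_apply_apply, polar]
  -- membership recovery: if mk x ∈ image of N, then x ∈ N
  have hrec : ∀ (N : Submodule 𝒪 V), M ≤ N → ∀ x : ↥(dualLattice 𝒪 Q M),
      (Submodule.Quotient.mk x : ↥(dualLattice 𝒪 Q M) ⧸ M.comap (dualLattice 𝒪 Q M).subtype) ∈
        Submodule.map (Submodule.mkQ (M.comap (dualLattice 𝒪 Q M).subtype))
          (N.comap (dualLattice 𝒪 Q M).subtype) → (x : V) ∈ N := by
    intro N hMN x hx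
    obtain ⟨y, hy, hxy⟩ := hx
    rw [Submodule.mkQ_apply, Submodule.Quotient.eq] at hxy
    have : ((y : V) - x) ∈ M := hxy
    have hyN : (y : V) ∈ N := hy
    have : (x : V) = (y : V) - ((y : V) - x) := by abel
    rw [this]
    exact N.sub_mem hyN (hMN hxy)
  constructor
  · -- MapsTo
    rintro N ⟨hMN, _, hQN⟩ x hx
    obtain ⟨y, hy, hxy⟩ := hx
    exact hQN x (hrec N hMN x ⟨y, hy, hxy⟩)
  constructor
  · -- InjOn
    rintro N₁ ⟨hMN₁, _, hQN₁⟩ N₂ ⟨hMN₂, _, hQN₂⟩ heq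
    have key : ∀ N N' : Submodule 𝒪 V, M ≤ N → M ≤ N' →
        (∀ x ∈ N, ∃ a : 𝒪, algebraMap 𝒪 K a = Q x) →
        Submodule.map (Submodule.mkQ (M.comap (dualLattice 𝒪 Q M).subtype))
          (N.comap (dualLattice 𝒪 Q M).subtype) =
        Submodule.map (Submodule.mkQ (M.comap (dualLattice 𝒪 Q M).subtype))
          (N'.comap (dualLattice 𝒪 Q M).subtype) → N ≤ N' := by
      intro N N' hMN hMN' hQN he x hx
      have hxD : x ∈ dualLattice 𝒪 Q M := hsub N hMN hQN hx
      apply hrec N' hMN' ⟨x, hxD⟩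
      rw [← he]
      exact ⟨⟨x, hxD⟩, hx, rfl⟩
    exact le_antisymm (key _ _ hMN₁ hMN₂ hQN₁ heq) (key _ _ hMN₂ hMN₁ hQN₂ heq.symm)
  · -- SurjOn
    rintro S hS
    have hMD : M ≤ dualLattice 𝒪 Q M := hsub M le_rfl hint
    refine ⟨Submodule.map (dualLattice 𝒪 Q M).subtype
      (S.comap (Submodule.mkQ (M.comap (dualLattice 𝒪 Q M).subtype))), ⟨?_, ?_, ?_⟩, ?_⟩
    · intro m hm
      exact ⟨⟨m, hMD hm⟩, by
        show Submodule.Quotient.mk _ ∈ S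
        rw [show (Submodule.Quotient.mk (⟨m, hMD hm⟩ : ↥(dualLattice 𝒪 Q M)) :
            ↥(dualLattice 𝒪 Q M) ⧸ M.comap (dualLattice 𝒪 Q M).subtype) = 0 from
          (Submodule.Quotient.mk_eq_zero _).2 hm]
        exact S.zero_mem, rfl⟩
    · rintro x ⟨y, _, rfl⟩
      exact ⟨1, by simpa using hdisc (y : V) y.2⟩
    · rintro x ⟨y, hy, rfl⟩
      exact hS y hy
    · show Submodule.map (Submodule.mkQ (M.comap (dualLattice 𝒪 Q M).subtype))
        ((Submodule.map (dualLattice 𝒪 Q M).subtype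
          (S.comap (Submodule.mkQ (M.comap (dualLattice 𝒪 Q M).subtype)))).comap
          (dualLattice 𝒪 Q M).subtype) = S
      rw [Submodule.comap_map_eq_of_injective (dualLattice 𝒪 Q M).injective_subtype,
        Submodule.map_comap_eq_of_surjective (Submodule.mkQ_surjective _)]
end

section
/- Let 𝒪 be a discrete valuation ring of mixed characteristic (0,p), (M̃,q̃) a self-dual quadratic space over 𝒪, and (M,q) ⊂ (M̃,q̃) an isometrically embedded direct summand. Then the map M̃/(M + M^⊥) → disc(M) and the map M̃/(M + M^⊥) → disc(M^⊥) induced by the self-duality of M̃ are isomorphisms, yielding an isometry disc(M) ≅ disc(M^⊥). Consequently, M is maximal if and only if M^⊥ ⊂ M̃ is maximal. -/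
open QuadraticMap

/-- The orthogonal complement `M^⊥ = { x ∈ M̃ : [x, M]_q = 0 }` of a sublattice `M` inside a
lattice `M̃`. -/
def perpLattice {𝒪 K V : Type*} [CommRing 𝒪] [Field K] [Algebra 𝒪 K]
    [AddCommGroup V] [Module K V] [Module 𝒪 V] [IsScalarTower 𝒪 K V]
    (Q : QuadraticForm K V) (Mt M : Submodule 𝒪 V) : Submodule 𝒪 V :=
  Mt ⊓
    { carrier := {x | ∀ m ∈ M, polarBilin Q x m = 0}
      add_mem' := by
        intro x y hx hy m hm
        simp [map_add, hx m hm, hy m hm]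
      zero_mem' := by intro m hm; simp
      smul_mem' := by
        intro c x hx m hm
        have h1 : (c • x : V) = (algebraMap 𝒪 K c) • x := (algebraMap_smul K c x).symm
        rw [h1, LinearMap.map_smul, LinearMap.smul_apply, hx m hm, smul_zero] }

/-- `M` is a maximal lattice: no strictly larger lattice in `M[1/p]` on which `Q` is
`𝒪`-valued. -/
def IsMaximalLattice {𝒪 K V : Type*} [CommRing 𝒪] [Field K] [Algebra 𝒪 K]
    [AddCommGroup V] [Module K V] [Module 𝒪 V] [IsScalarTower 𝒪 K V]
    (p : ℕ) (Q : QuadraticForm K V) (M : Submodule 𝒪 V) : Prop :=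
  ∀ N : Submodule 𝒪 V, M ≤ N → (∀ x ∈ N, ∃ nn : ℕ, (p : 𝒪) ^ nn • x ∈ M) →
    (∀ x ∈ N, ∃ a : 𝒪, algebraMap 𝒪 K a = Q x) → N = M

set_option linter.unusedSectionVars false
section Aux
variable {𝒪 : Type*} [CommRing 𝒪] [IsDomain 𝒪]
    {K : Type*} [Field K] [Algebra 𝒪 K] [IsFractionRing 𝒪 K]
    {V : Type*} [AddCommGroup V] [Module K V] [Module 𝒪 V] [IsScalarTower 𝒪 K V]

lemma aux_clear (S : Submodule 𝒪 V) (v : V) (hv : v ∈ Submodule.span K (S : Set V)) :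
    ∃ c : 𝒪, c ≠ 0 ∧ c • v ∈ S := by
  induction hv using Submodule.span_induction with
  | mem x hx => exact ⟨1, one_ne_zero, by simpa using hx⟩
  | zero => exact ⟨1, one_ne_zero, by simp⟩
  | add x y _ _ hx hy =>
    obtain ⟨c, hc, hcx⟩ := hx
    obtain ⟨d, hd, hdy⟩ := hy
    refine ⟨c * d, mul_ne_zero hc hd, ?_⟩
    have : (c * d) • (x + y) = d • (c • x) + c • (d • y) := by
      rw [smul_add]; rw [smul_smul, smul_smul, mul_comm d c]
    rw [this]
    exact S.add_mem (S.smul_mem d hcx) (S.smul_mem c hdy)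
  | smul k x _ hx =>
    obtain ⟨c, hc, hcx⟩ := hx
    obtain ⟨⟨a, b⟩, hk⟩ := IsLocalization.mk'_surjective (nonZeroDivisors 𝒪) k
    refine ⟨b * c, mul_ne_zero (nonZeroDivisors.coe_ne_zero b) hc, ?_⟩
    have hba : algebraMap 𝒪 K b * k = algebraMap 𝒪 K a := by
      rw [← hk, mul_comm, IsLocalization.mk'_spec]
    have h1 : (b * c : 𝒪) • (k • x) = a • (c • x) := by
      rw [← algebraMap_smul K (b * c : 𝒪), smul_smul, ← algebraMap_smul K c x,
        ← algebraMap_smul K a, smul_smul]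
      congr 1
      rw [map_mul, ← hba]; ring
    rw [h1]
    exact S.smul_mem a hcx

lemma aux_alg_ne (c : 𝒪) (hc : c ≠ 0) : algebraMap 𝒪 K c ≠ 0 := by
  simpa using (IsFractionRing.injective 𝒪 K).ne_iff.mpr hc

lemma aux_span_of_smul (S : Submodule 𝒪 V) (c : 𝒪) (hc : c ≠ 0) (v : V)
    (h : c • v ∈ S) : v ∈ Submodule.span K (S : Set V) := by
  have : v = (algebraMap 𝒪 K c)⁻¹ • (c • v) := by
    rw [← algebraMap_smul K c v, smul_smul, inv_mul_cancel₀ (aux_alg_ne c hc), one_smul]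
  rw [this]
  exact Submodule.smul_mem _ _ (Submodule.subset_span h)

end Aux

set_option linter.unusedSectionVars false
section Aux2
variable {𝒪 : Type*} [CommRing 𝒪] [IsDomain 𝒪]
    {K : Type*} [Field K] [Algebra 𝒪 K] [IsFractionRing 𝒪 K]
    {V : Type*} [AddCommGroup V] [Module K V] [Module 𝒪 V] [IsScalarTower 𝒪 K V]
    (Q : QuadraticForm K V)

lemma aux_symm (x y : V) : polarBilin Q x y = polarBilin Q y x := by
  simp only [polarBilin_apply_apply]
  exact polar_comm Q x y

lemma aux_perp_span (S : Submodule 𝒪 V) (v : V) (h : ∀ m ∈ S, polarBilin Q v m = 0) :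
    ∀ w ∈ Submodule.span K (S : Set V), polarBilin Q v w = 0 := by
  intro w hw
  have hle : Submodule.span K (S : Set V) ≤ LinearMap.ker (polarBilin Q v) :=
    Submodule.span_le.mpr fun m hm => LinearMap.mem_ker.mpr (h m hm)
  exact hle hw

lemma aux_perp_span' (S : Submodule 𝒪 V) (v : V) (h : ∀ m ∈ S, polarBilin Q m v = 0) :
    ∀ w ∈ Submodule.span K (S : Set V), polarBilin Q w v = 0 := by
  intro w hw
  rw [aux_symm]
  exact aux_perp_span Q S v (fun m hm => by rw [aux_symm]; exact h m hm) w hw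

lemma aux_rep [FiniteDimensional K V] (hnd : (polarBilin Q).Nondegenerate)
    (f : Module.Dual K V) : ∃ x : V, ∀ w, polarBilin Q x w = f w := by
  have hnd' : LinearMap.BilinForm.Nondegenerate (polarBilin Q) := hnd
  exact ⟨(LinearMap.BilinForm.toDual (polarBilin Q) hnd').symm f, fun w =>
    LinearMap.BilinForm.apply_toDual_symm_apply f w⟩

lemma aux_disjoint (A C : Submodule 𝒪 V) (h0 : A ⊓ C = ⊥) :
    Submodule.span K (A : Set V) ⊓ Submodule.span K (C : Set V) = ⊥ := by
  rw [eq_bot_iff]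
  intro v hv
  obtain ⟨hvA, hvC⟩ := Submodule.mem_inf.mp hv
  obtain ⟨c, hc, hcv⟩ := aux_clear A v hvA
  obtain ⟨d, hd, hdv⟩ := aux_clear C v hvC
  have h1 : (c * d) • v ∈ A ⊓ C := by
    rw [Submodule.mem_inf]
    constructor
    · rw [mul_comm, mul_smul]; exact A.smul_mem d hcv
    · rw [mul_smul]; exact C.smul_mem c hdv
  rw [h0, Submodule.mem_bot] at h1
  have h2 : (algebraMap 𝒪 K (c * d)) • v = 0 := by rw [algebraMap_smul]; exact h1
  rw [smul_eq_zero] at h2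
  rcases h2 with h2 | h2
  · exact absurd h2 (aux_alg_ne _ (mul_ne_zero hc hd))
  · rw [Submodule.mem_bot]; exact h2

lemma aux_proj (Mt A C : Submodule 𝒪 V) (hfull : Submodule.span K (Mt : Set V) = ⊤)
    (h0 : A ⊓ C = ⊥) (hsup : A ⊔ C = Mt) :
    ∃ π : V →ₗ[K] V, (∀ w ∈ Submodule.span K (A : Set V), π w = w) ∧
      (∀ w ∈ Submodule.span K (C : Set V), π w = 0) := by
  have hdis : Disjoint (Submodule.span K (A : Set V)) (Submodule.span K (C : Set V)) :=
    disjoint_iff.mpr (aux_disjoint A C h0)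
  have hcodis : Submodule.span K (A : Set V) ⊔ Submodule.span K (C : Set V) = ⊤ := by
    rw [eq_top_iff, ← hfull]
    refine Submodule.span_le.mpr ?_
    intro v hv
    rw [← hsup] at hv
    obtain ⟨a, ha, c, hc, rfl⟩ := Submodule.mem_sup.mp hv
    exact Submodule.add_mem _ (Submodule.mem_sup_left (Submodule.subset_span ha))
      (Submodule.mem_sup_right (Submodule.subset_span hc))
  have hcompl : IsCompl (Submodule.span K (A : Set V)) (Submodule.span K (C : Set V)) :=
    ⟨hdis, codisjoint_iff.mpr hcodis⟩
  refine ⟨(Submodule.span K (A : Set V)).subtype ∘ₗ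
    Submodule.projectionOnto _ _ hcompl, ?_, ?_⟩
  · intro w hw
    have := Submodule.projectionOnto_apply_left hcompl ⟨w, hw⟩
    simp only [LinearMap.comp_apply, Submodule.coe_subtype]
    rw [this]
  · intro w hw
    have := Submodule.projectionOnto_apply_of_mem_right hcompl hw
    simp only [LinearMap.comp_apply, Submodule.coe_subtype]
    rw [this, Submodule.coe_zero]

lemma aux_complement [IsPrincipalIdealRing 𝒪] (Mt : Submodule 𝒪 V) (hfg : Mt.FG)
    (P : Submodule 𝒪 V) (hPle : P ≤ Mt)
    (htf : ∀ (c : 𝒪) (x : V), c ≠ 0 → x ∈ Mt → c • x ∈ P → x ∈ P) :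
    ∃ C : Submodule 𝒪 V, C ≤ Mt ∧ P ⊓ C = ⊥ ∧ P ⊔ C = Mt := by
  haveI : Module.Finite 𝒪 ↥Mt := Module.Finite.iff_fg.mpr hfg
  set P' := P.comap Mt.subtype with hP'
  haveI : NoZeroSMulDivisors 𝒪 (↥Mt ⧸ P') := by
    refine ⟨fun {c x} h => ?_⟩
    obtain ⟨x, rfl⟩ := Submodule.Quotient.mk_surjective P' x
    rcases eq_or_ne c 0 with rfl | hc
    · exact Or.inl rfl
    · refine Or.inr ?_
      rw [← Submodule.Quotient.mk_smul, Submodule.Quotient.mk_eq_zero] at h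
      rw [Submodule.Quotient.mk_eq_zero]
      have h2 : c • (x : V) ∈ P := h
      exact htf c (x : V) hc x.2 h2
  haveI : Module.Free 𝒪 (↥Mt ⧸ P') := Module.free_of_finite_type_torsion_free'
  obtain ⟨σ, hσ⟩ := LinearMap.exists_rightInverse_of_surjective P'.mkQ
    (Submodule.range_mkQ P')
  have hσ' : ∀ u, P'.mkQ (σ u) = u := fun u => LinearMap.congr_fun hσ u
  refine ⟨(LinearMap.range σ).map Mt.subtype, Submodule.map_subtype_le Mt _, ?_, ?_⟩
  · rw [eq_bot_iff]
    intro v hv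
    obtain ⟨hvP, hvC⟩ := Submodule.mem_inf.mp hv
    obtain ⟨w, hw, rfl⟩ := hvC
    obtain ⟨u, rfl⟩ := hw
    have h1 : σ u ∈ P' := hvP
    have h2 : P'.mkQ (σ u) = 0 := (Submodule.Quotient.mk_eq_zero P').mpr h1
    rw [hσ' u] at h2
    rw [h2]; simp
  · refine le_antisymm (sup_le hPle (Submodule.map_subtype_le Mt _)) ?_
    intro v hv
    set w : ↥Mt := ⟨v, hv⟩ with hwdef
    have h1 : w - σ (P'.mkQ w) ∈ P' := by
      have : P'.mkQ (w - σ (P'.mkQ w)) = 0 := by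
        rw [_root_.map_sub, hσ' (P'.mkQ w), sub_self]
      rwa [← Submodule.Quotient.mk_eq_zero]
    refine Submodule.mem_sup.mpr ⟨(w - σ (P'.mkQ w) : ↥Mt), h1, (σ (P'.mkQ w) : ↥Mt),
      ⟨σ (P'.mkQ w), ⟨P'.mkQ w, rfl⟩, rfl⟩, ?_⟩
    simp [hwdef]

end Aux2

/-- Let `𝒪` be a discrete valuation ring of mixed characteristic `(0, p)`,
`(M̃, q̃)` a self-dual quadratic lattice over `𝒪`, and `(M, q) ⊆ (M̃, q̃)` an isometrically
embedded direct summand with orthogonal complement `M^⊥`.  Let `pM` be the orthogonal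
projection of `V = M̃ ⊗ K` onto the span of `M`.  Then the maps
`M̃/(M + M^⊥) → disc(M)`, `x ↦ pM x`, and `M̃/(M + M^⊥) → disc(M^⊥)`, `x ↦ x − pM x`,
induced by the self-duality of `M̃`, are isomorphisms, yielding an isometry
`disc(M) ≅ disc(M^⊥)` (the `K/𝒪`-valued forms are compatible: `Q(pM x) + Q(x − pM x) ∈ 𝒪`).
Consequently, `M` is maximal if and only if `M^⊥ ⊆ M̃` is maximal. -/
theorem stmt_6 (𝒪 : Type*) [CommRing 𝒪] [IsDomain 𝒪] [IsDiscreteValuationRing 𝒪]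
    (K : Type*) [Field K] [Algebra 𝒪 K] [IsFractionRing 𝒪 K]
    (p : ℕ) [Fact p.Prime] [CharZero 𝒪]
    (hp : (p : 𝒪) ∈ IsLocalRing.maximalIdeal 𝒪)
    (V : Type*) [AddCommGroup V] [Module K V] [Module 𝒪 V] [IsScalarTower 𝒪 K V]
    (Q : QuadraticForm K V)
    (hnd : (QuadraticMap.polarBilin Q).Nondegenerate)
    (Mt : Submodule 𝒪 V) (hfgt : Mt.FG)
    (hfullt : Submodule.span K (Mt : Set V) = ⊤)
    (hintt : ∀ x ∈ Mt, ∃ a : 𝒪, algebraMap 𝒪 K a = Q x)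
    (hselfdual : dualLattice 𝒪 Q Mt = Mt)
    (M : Submodule 𝒪 V) (hMMt : M ≤ Mt)
    (hsummand : ∃ N' : Submodule 𝒪 V, N' ≤ Mt ∧ M ⊓ N' = ⊥ ∧ M ⊔ N' = Mt)
    (pM : V →ₗ[K] V)
    (hpM1 : ∀ x : V, pM x ∈ Submodule.span K (M : Set V))
    (hpM2 : ∀ x : V, ∀ m ∈ M, polarBilin Q (x - pM x) m = 0)
    (hpM3 : ∀ x ∈ Submodule.span K (M : Set V), pM x = x) :
    (∀ x ∈ Mt,
        pM x ∈ dualLattice 𝒪 Q M ⊓ Submodule.restrictScalars 𝒪 (Submodule.span K (M : Set V)) ∧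
        x - pM x ∈ dualLattice 𝒪 Q (perpLattice Q Mt M) ⊓
          Submodule.restrictScalars 𝒪 (Submodule.span K ((perpLattice Q Mt M : Set V)))) ∧
    (∀ y ∈ dualLattice 𝒪 Q M ⊓ Submodule.restrictScalars 𝒪 (Submodule.span K (M : Set V)),
        ∃ x ∈ Mt, y - pM x ∈ M) ∧
    (∀ x ∈ Mt, pM x ∈ M → x ∈ M ⊔ perpLattice Q Mt M) ∧
    (∀ y ∈ dualLattice 𝒪 Q (perpLattice Q Mt M) ⊓
          Submodule.restrictScalars 𝒪 (Submodule.span K ((perpLattice Q Mt M : Set V))),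
        ∃ x ∈ Mt, y - (x - pM x) ∈ perpLattice Q Mt M) ∧
    (∀ x ∈ Mt, x - pM x ∈ perpLattice Q Mt M → x ∈ M ⊔ perpLattice Q Mt M) ∧
    (∀ x ∈ Mt, ∃ a : 𝒪, algebraMap 𝒪 K a = Q (pM x) + Q (x - pM x)) ∧
    (IsMaximalLattice p Q M ↔ IsMaximalLattice p Q (perpLattice Q Mt M)) := by
  obtain ⟨N', hN'le, hN'inf, hN'sup⟩ := hsummand
  set P := perpLattice Q Mt M with hPdef
  have hPmem : ∀ x : V, x ∈ P ↔ x ∈ Mt ∧ ∀ m ∈ M, polarBilin Q x m = 0 := fun x => Iff.rfl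
  have hPle : P ≤ Mt := fun q hq => ((hPmem q).1 hq).1
  -- finite dimensionality
  haveI : FiniteDimensional K V := by
    obtain ⟨s, hs⟩ := hfgt
    refine Module.finite_def.mpr ⟨s, ?_⟩
    rw [eq_top_iff, ← hfullt]
    refine Submodule.span_le.mpr ?_
    intro v hv
    have hv' : v ∈ Submodule.span 𝒪 (s : Set V) := hs ▸ hv
    have hle : Submodule.span 𝒪 (s : Set V) ≤
        Submodule.restrictScalars 𝒪 (Submodule.span K (s : Set V)) :=
      Submodule.span_le.mpr fun y hy => Submodule.subset_span hy
    exact hle hv'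
  -- pairing of Mt with itself is integral
  have hL2 : ∀ x ∈ Mt, ∀ y ∈ Mt, ∃ a : 𝒪, algebraMap 𝒪 K a = polarBilin Q x y := by
    intro x hx y hy
    rw [← hselfdual] at hx
    exact hx y hy
  -- linearity in first argument, applied
  have hsub1 : ∀ u v w : V, polarBilin Q (u - v) w = polarBilin Q u w - polarBilin Q v w := by
    intro u v w
    rw [_root_.map_sub, LinearMap.sub_apply]
  have horth : ∀ x : V, ∀ w ∈ Submodule.span K (M : Set V), polarBilin Q (x - pM x) w = 0 :=
    fun x => aux_perp_span Q M _ (hpM2 x)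
  have hzeroM : ∀ v ∈ Submodule.span K (M : Set V), (∀ m ∈ M, polarBilin Q v m = 0) → v = 0 := by
    intro v hv h
    refine hnd.1 v fun w => ?_
    have e : polarBilin Q v w = polarBilin Q v (pM w) + polarBilin Q v (w - pM w) := by
      rw [← _root_.map_add]
      congr 1
      abel
    rw [e, aux_perp_span Q M v h _ (hpM1 w), aux_symm Q v (w - pM w), horth w v hv, add_zero]
  -- span of P is the orthogonal complement of M
  have hspanPiff : ∀ v : V, v ∈ Submodule.span K (P : Set V) ↔
      ∀ m ∈ M, polarBilin Q v m = 0 := by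
    intro v
    constructor
    · intro hv m hm
      exact aux_perp_span' Q P m (fun q hq => ((hPmem q).1 hq).2 m hm) v hv
    · intro h
      obtain ⟨c, hc, hcv⟩ := aux_clear Mt v (by rw [hfullt]; trivial)
      refine aux_span_of_smul P c hc v ((hPmem _).mpr ⟨hcv, fun m hm => ?_⟩)
      rw [← algebraMap_smul K c v, LinearMap.map_smul, LinearMap.smul_apply, h m hm, smul_zero]
  have hWspanP : ∀ x : V, x - pM x ∈ Submodule.span K (P : Set V) :=
    fun x => (hspanPiff _).2 (hpM2 x)
  have hzeroP : ∀ v ∈ Submodule.span K (P : Set V), (∀ q ∈ P, polarBilin Q v q = 0) → v = 0 := by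
    intro v hv h
    refine hnd.1 v fun w => ?_
    have hvM : ∀ m ∈ M, polarBilin Q v m = 0 := (hspanPiff v).1 hv
    have e : polarBilin Q v w = polarBilin Q v (pM w) + polarBilin Q v (w - pM w) := by
      rw [← _root_.map_add]
      congr 1
      abel
    rw [e, aux_perp_span Q M v hvM _ (hpM1 w), aux_perp_span Q P v h _ (hWspanP w), add_zero]
  -- membership in M from span
  have hMtM : ∀ v ∈ Mt, v ∈ Submodule.span K (M : Set V) → v ∈ M := by
    intro v hv hvs
    rw [← hN'sup] at hv
    obtain ⟨m, hm, n, hn, rfl⟩ := Submodule.mem_sup.mp hv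
    have hn0 : n ∈ Submodule.span K (M : Set V) ⊓ Submodule.span K (N' : Set V) := by
      constructor
      · have := Submodule.sub_mem _ hvs (Submodule.subset_span hm)
        simpa using this
      · exact Submodule.subset_span hn
    rw [aux_disjoint M N' hN'inf, Submodule.mem_bot] at hn0
    rw [hn0, add_zero]
    exact hm
  have hMtP : ∀ v ∈ Mt, v ∈ Submodule.span K (P : Set V) → v ∈ P :=
    fun v hv hvs => (hPmem v).mpr ⟨hv, (hspanPiff v).1 hvs⟩
  -- B (pM x) m = B x m for m ∈ M
  have hpMro : ∀ x : V, ∀ m ∈ M, polarBilin Q (pM x) m = polarBilin Q x m := by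
    intro x m hm
    have h1 := hpM2 x m hm
    rw [hsub1] at h1
    exact (sub_eq_zero.mp h1).symm
  -- B (pM x) q = 0 for q ∈ P
  have hpMP : ∀ x : V, ∀ q ∈ P, polarBilin Q (pM x) q = 0 := by
    intro x q hq
    rw [aux_symm]
    exact aux_perp_span Q M q ((hPmem q).1 hq).2 _ (hpM1 x)
  -- Part 1
  have hpart1 : ∀ x ∈ Mt,
      pM x ∈ dualLattice 𝒪 Q M ⊓ Submodule.restrictScalars 𝒪 (Submodule.span K (M : Set V)) ∧
      x - pM x ∈ dualLattice 𝒪 Q P ⊓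
        Submodule.restrictScalars 𝒪 (Submodule.span K (P : Set V)) := by
    intro x hx
    refine ⟨Submodule.mem_inf.mpr ⟨?_, hpM1 x⟩, Submodule.mem_inf.mpr ⟨?_, hWspanP x⟩⟩
    · intro m hm
      obtain ⟨a, ha⟩ := hL2 x hx m (hMMt hm)
      exact ⟨a, by rw [hpMro x m hm]; exact ha⟩
    · intro q hq
      obtain ⟨a, ha⟩ := hL2 x hx q (hPle hq)
      refine ⟨a, ?_⟩
      rw [hsub1, hpMP x q hq, sub_zero]
      exact ha
  -- Part 3
  have hpart3 : ∀ x ∈ Mt, pM x ∈ M → x ∈ M ⊔ P := by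
    intro x hx h
    have hxP : x - pM x ∈ P := (hPmem _).mpr ⟨Submodule.sub_mem Mt hx (hMMt h), hpM2 x⟩
    exact Submodule.mem_sup.mpr ⟨pM x, h, x - pM x, hxP, by abel⟩
  -- Part 5
  have hpart5 : ∀ x ∈ Mt, x - pM x ∈ P → x ∈ M ⊔ P := by
    intro x hx h
    have hxm : pM x ∈ Mt := by
      have e : pM x = x - (x - pM x) := by abel
      rw [e]
      exact Submodule.sub_mem Mt hx (hPle h)
    have hpMx : pM x ∈ M := hMtM _ hxm (hpM1 x)
    exact Submodule.mem_sup.mpr ⟨pM x, hpMx, x - pM x, h, by abel⟩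
  -- Part 6
  have hpart6 : ∀ x ∈ Mt, ∃ a : 𝒪, algebraMap 𝒪 K a = Q (pM x) + Q (x - pM x) := by
    intro x hx
    obtain ⟨a, ha⟩ := hintt x hx
    refine ⟨a, ?_⟩
    have hpol : polar Q (pM x) (x - pM x) = 0 := by
      rw [← polarBilin_apply_apply, aux_symm]
      exact horth x (pM x) (hpM1 x)
    have e1 : Q (pM x + (x - pM x)) = Q (pM x) + Q (x - pM x) + polar Q (pM x) (x - pM x) :=
      QuadraticMap.map_add Q _ _
    have e2 : pM x + (x - pM x) = x := by abel
    rw [ha]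
    conv_lhs => rw [← e2]
    rw [e1, hpol, add_zero]
  -- Part 2
  have hpart2 : ∀ y ∈ dualLattice 𝒪 Q M ⊓
      Submodule.restrictScalars 𝒪 (Submodule.span K (M : Set V)), ∃ x ∈ Mt, y - pM x ∈ M := by
    obtain ⟨πM, hπM1, hπM2⟩ := aux_proj Mt M N' hfullt hN'inf hN'sup
    intro y hy
    obtain ⟨hyd, hys⟩ := Submodule.mem_inf.mp hy
    have hys' : y ∈ Submodule.span K (M : Set V) := hys
    obtain ⟨x, hxrep⟩ := aux_rep Q hnd ((polarBilin Q y) ∘ₗ πM)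
    have hxMt : x ∈ Mt := by
      rw [← hselfdual]
      intro w hw
      rw [← hN'sup] at hw
      obtain ⟨m, hm, n, hn, rfl⟩ := Submodule.mem_sup.mp hw
      have hπ : πM (m + n) = m := by
        rw [_root_.map_add, hπM1 m (Submodule.subset_span hm),
          hπM2 n (Submodule.subset_span hn), add_zero]
      obtain ⟨a, ha⟩ := hyd m hm
      refine ⟨a, ?_⟩
      rw [hxrep, LinearMap.comp_apply, hπ]
      exact ha
    refine ⟨x, hxMt, ?_⟩
    have h0 : y - pM x = 0 := by
      refine hzeroM _ (Submodule.sub_mem _ hys' (hpM1 x)) fun m hm => ?_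
      rw [hsub1, hpMro x m hm]
      have : polarBilin Q x m = polarBilin Q y m := by
        rw [hxrep m, LinearMap.comp_apply, hπM1 m (Submodule.subset_span hm)]
      rw [this, sub_self]
    rw [h0]
    exact M.zero_mem
  -- Part 4
  have htf : ∀ (c : 𝒪) (x : V), c ≠ 0 → x ∈ Mt → c • x ∈ P → x ∈ P := by
    intro c x hc hx h
    refine (hPmem x).mpr ⟨hx, fun m hm => ?_⟩
    have h1 := ((hPmem _).1 h).2 m hm
    rw [← algebraMap_smul K c x, LinearMap.map_smul, LinearMap.smul_apply,
      smul_eq_mul] at h1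
    rcases mul_eq_zero.mp h1 with h2 | h2
    · exact absurd h2 (aux_alg_ne c hc)
    · exact h2
  obtain ⟨C, hCle, hC0, hCsup⟩ := aux_complement Mt hfgt P hPle htf
  have hpart4 : ∀ y ∈ dualLattice 𝒪 Q P ⊓
      Submodule.restrictScalars 𝒪 (Submodule.span K (P : Set V)),
      ∃ x ∈ Mt, y - (x - pM x) ∈ P := by
    obtain ⟨πP, hπP1, hπP2⟩ := aux_proj Mt P C hfullt hC0 hCsup
    intro y hy
    obtain ⟨hyd, hys⟩ := Submodule.mem_inf.mp hy
    have hys' : y ∈ Submodule.span K (P : Set V) := hys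
    obtain ⟨x, hxrep⟩ := aux_rep Q hnd ((polarBilin Q y) ∘ₗ πP)
    have hxMt : x ∈ Mt := by
      rw [← hselfdual]
      intro w hw
      rw [← hCsup] at hw
      obtain ⟨q, hq, c, hc, rfl⟩ := Submodule.mem_sup.mp hw
      have hπ : πP (q + c) = q := by
        rw [_root_.map_add, hπP1 q (Submodule.subset_span hq),
          hπP2 c (Submodule.subset_span hc), add_zero]
      obtain ⟨a, ha⟩ := hyd q hq
      refine ⟨a, ?_⟩
      rw [hxrep, LinearMap.comp_apply, hπ]
      exact ha
    refine ⟨x, hxMt, ?_⟩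
    have h0 : y - (x - pM x) = 0 := by
      refine hzeroP _ (Submodule.sub_mem _ hys' (hWspanP x)) fun q hq => ?_
      rw [hsub1, hsub1, hpMP x q hq, sub_zero]
      have : polarBilin Q x q = polarBilin Q y q := by
        rw [hxrep q, LinearMap.comp_apply, hπP1 q (Submodule.subset_span hq)]
      rw [this, sub_self]
    rw [h0]
    exact P.zero_mem
  -- Part 7
  have hpK : ((p : 𝒪) : 𝒪) ≠ 0 := Nat.cast_ne_zero.mpr (Fact.out : p.Prime).ne_zero
  have hdualgen : ∀ (S N : Submodule 𝒪 V), S ≤ N → (∀ z ∈ N, ∃ a : 𝒪, algebraMap 𝒪 K a = Q z) →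
      ∀ x ∈ N, x ∈ dualLattice 𝒪 Q S := by
    intro S N hSN hint x hxN s hs
    obtain ⟨a1, h1⟩ := hint (x + s) (N.add_mem hxN (hSN hs))
    obtain ⟨a2, h2⟩ := hint x hxN
    obtain ⟨a3, h3⟩ := hint s (hSN hs)
    refine ⟨a1 - a2 - a3, ?_⟩
    rw [_root_.map_sub, _root_.map_sub, h1, h2, h3, polarBilin_apply_apply, polar]
  have hsupint : ∀ (S : Submodule 𝒪 V) (y : V), (∀ s ∈ S, ∃ a : 𝒪, algebraMap 𝒪 K a = Q s) →
      (∃ a : 𝒪, algebraMap 𝒪 K a = Q y) →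
      (∀ s ∈ S, ∃ a : 𝒪, algebraMap 𝒪 K a = polarBilin Q y s) →
      ∀ z ∈ S ⊔ Submodule.span 𝒪 {y}, ∃ a : 𝒪, algebraMap 𝒪 K a = Q z := by
    intro S y hS hy hpol z hz
    obtain ⟨s, hs, w, hw, rfl⟩ := Submodule.mem_sup.mp hz
    obtain ⟨c, rfl⟩ := Submodule.mem_span_singleton.mp hw
    obtain ⟨a1, h1⟩ := hS s hs
    obtain ⟨a2, h2⟩ := hy
    obtain ⟨a3, h3⟩ := hpol s hs
    refine ⟨a1 + c * c * a2 + c * a3, ?_⟩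
    have hcy : (c • y : V) = algebraMap 𝒪 K c • y := (algebraMap_smul K c y).symm
    have e1 : Q (s + c • y) = Q s + Q (c • y) + polar Q s (c • y) := QuadraticMap.map_add Q _ _
    have e2 : Q (c • y) = algebraMap 𝒪 K c * algebraMap 𝒪 K c * Q y := by
      rw [hcy, QuadraticMap.map_smul, smul_eq_mul]
    have e3 : polar (⇑Q) s (c • y) = algebraMap 𝒪 K c * polar (⇑Q) y s := by
      rw [hcy, polar_smul_right, polar_comm, smul_eq_mul]
    rw [e1, e2, e3, map_add, map_add, map_mul, map_mul, map_mul, h1, h2, h3,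
      polarBilin_apply_apply]
  have hppow : ∀ (n : ℕ), ((p : 𝒪) ^ n : 𝒪) ≠ 0 := fun n => pow_ne_zero n hpK
  -- the equivalence of maximality
  have hpart7 : IsMaximalLattice p Q M ↔ IsMaximalLattice p Q P := by
    constructor
    · -- M maximal → P maximal
      intro hM N hPN hpow hint
      refine le_antisymm ?_ hPN
      intro x hx
      -- x is in the dual of P and in the span of P
      have hxdual : x ∈ dualLattice 𝒪 Q P := hdualgen P N hPN hint x hx
      obtain ⟨n, hn⟩ := hpow x hx
      have hxspan : x ∈ Submodule.span K (P : Set V) :=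
        aux_span_of_smul P ((p : 𝒪) ^ n) (hppow n) x hn
      obtain ⟨xt, hxtMt, hq0⟩ := hpart4 x (Submodule.mem_inf.mpr ⟨hxdual, hxspan⟩)
      set q0 : V := x - (xt - pM xt) with hq0def
      set y : V := pM xt with hydef
      obtain ⟨hy1, hy2⟩ := hpart1 xt hxtMt
      obtain ⟨hyd, hyspan⟩ := Submodule.mem_inf.mp hy1
      -- p ^ n • y ∈ M
      have hw1 : (p : 𝒪) ^ n • (xt - pM xt) ∈ P := by
        have e : (p : 𝒪) ^ n • (xt - pM xt) = (p : 𝒪) ^ n • x - (p : 𝒪) ^ n • q0 := by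
          rw [hq0def]
          module
        rw [e]
        exact P.sub_mem hn (P.smul_mem _ hq0)
      have hw2 : (p : 𝒪) ^ n • y ∈ M := by
        have e : (p : 𝒪) ^ n • y = (p : 𝒪) ^ n • xt - (p : 𝒪) ^ n • (xt - pM xt) := by
          rw [hydef]
          module
        have hys2 : (p : 𝒪) ^ n • y ∈ Submodule.restrictScalars 𝒪
            (Submodule.span K (M : Set V)) := Submodule.smul_mem _ _ hyspan
        refine hMtM _ ?_ hys2
        rw [e]
        exact Mt.sub_mem (Mt.smul_mem _ hxtMt) (hPle hw1)
      -- Q y is integral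
      have hQq0 : ∃ a : 𝒪, algebraMap 𝒪 K a = Q q0 := hint q0 (hPN hq0)
      have hQx : ∃ a : 𝒪, algebraMap 𝒪 K a = Q x := hint x hx
      have hBxq0 : ∃ a : 𝒪, algebraMap 𝒪 K a = polarBilin Q x q0 :=
        hdualgen P N hPN hint x hx q0 hq0
      have hQsub : ∀ u v : V, Q (u - v) = Q u + Q v - polar (⇑Q) u v := by
        intro u v
        rw [sub_eq_add_neg, QuadraticMap.map_add (⇑Q) u (-v), QuadraticMap.map_neg, polar_neg_right]
        ring
      have hQw : ∃ a : 𝒪, algebraMap 𝒪 K a = Q (xt - y) := by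
        obtain ⟨a1, h1⟩ := hQx
        obtain ⟨a2, h2⟩ := hQq0
        obtain ⟨a3, h3⟩ := hBxq0
        rw [polarBilin_apply_apply] at h3
        refine ⟨a1 + a2 - a3, ?_⟩
        have e : xt - y = x - q0 := by rw [hq0def]; module
        rw [e, hQsub, _root_.map_sub, _root_.map_add, h1, h2, h3]
      have hQy : ∃ a : 𝒪, algebraMap 𝒪 K a = Q y := by
        obtain ⟨a6, h6⟩ := hpart6 xt hxtMt
        obtain ⟨aw, hw⟩ := hQw
        exact ⟨a6 - aw, by rw [_root_.map_sub, h6, hw]; ring⟩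
      -- maximality of M applied to M ⊔ span {y}
      have hMy : M ⊔ Submodule.span 𝒪 {y} = M := by
        refine hM (M ⊔ Submodule.span 𝒪 {y}) le_sup_left ?_ ?_
        · intro z hz
          obtain ⟨m, hm, w, hw, rfl⟩ := Submodule.mem_sup.mp hz
          obtain ⟨c, rfl⟩ := Submodule.mem_span_singleton.mp hw
          refine ⟨n, ?_⟩
          have e : (p : 𝒪) ^ n • (m + c • y) = (p : 𝒪) ^ n • m + c • ((p : 𝒪) ^ n • y) := by
            module
          rw [e]
          exact M.add_mem (M.smul_mem _ hm) (M.smul_mem c hw2)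
        · exact hsupint M y (fun s hs => hintt s (hMMt hs)) hQy (fun s hs => hyd s hs)
      have hyM : y ∈ M := by
        have : y ∈ M ⊔ Submodule.span 𝒪 {y} :=
          Submodule.mem_sup_right (Submodule.mem_span_singleton_self y)
        rwa [hMy] at this
      have hxyP : xt - y ∈ P :=
        (hPmem _).mpr ⟨Mt.sub_mem hxtMt (hMMt hyM), hpM2 xt⟩
      have e : x = (xt - y) + q0 := by rw [hq0def]; module
      rw [e]
      exact P.add_mem hxyP hq0
    · -- P maximal → M maximal
      intro hP N hMN hpow hint
      refine le_antisymm ?_ hMN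
      intro x hx
      have hxdual : x ∈ dualLattice 𝒪 Q M := hdualgen M N hMN hint x hx
      obtain ⟨n, hn⟩ := hpow x hx
      have hxspan : x ∈ Submodule.span K (M : Set V) :=
        aux_span_of_smul M ((p : 𝒪) ^ n) (hppow n) x hn
      obtain ⟨xt, hxtMt, hm0⟩ := hpart2 x (Submodule.mem_inf.mpr ⟨hxdual, hxspan⟩)
      obtain ⟨hy1, hy2⟩ := hpart1 xt hxtMt
      obtain ⟨hyd, hyspan⟩ := Submodule.mem_inf.mp hy2
      have hQsub : ∀ u v : V, Q (u - v) = Q u + Q v - polar (⇑Q) u v := by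
        intro u v
        rw [sub_eq_add_neg, QuadraticMap.map_add (⇑Q) u (-v), QuadraticMap.map_neg, polar_neg_right]
        ring
      -- torsion for xt - pM xt
      have hpMxtM : (p : 𝒪) ^ n • pM xt ∈ M := by
        have e : (p : 𝒪) ^ n • pM xt = (p : 𝒪) ^ n • x - (p : 𝒪) ^ n • (x - pM xt) := by
          module
        rw [e]
        exact M.sub_mem hn (M.smul_mem _ hm0)
      have hw2 : (p : 𝒪) ^ n • (xt - pM xt) ∈ P := by
        have hys2 : (p : 𝒪) ^ n • (xt - pM xt) ∈ Submodule.restrictScalars 𝒪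
            (Submodule.span K (P : Set V)) := Submodule.smul_mem _ _ hyspan
        refine hMtP _ ?_ hys2
        have e : (p : 𝒪) ^ n • (xt - pM xt) = (p : 𝒪) ^ n • xt - (p : 𝒪) ^ n • pM xt := by
          module
        rw [e]
        exact Mt.sub_mem (Mt.smul_mem _ hxtMt) (hMMt hpMxtM)
      -- integrality of Q (pM xt) and Q (xt - pM xt)
      have hQpM : ∃ a : 𝒪, algebraMap 𝒪 K a = Q (pM xt) := by
        obtain ⟨a1, h1⟩ := hint x hx
        obtain ⟨a2, h2⟩ := hint (x - pM xt) (hMN hm0)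
        obtain ⟨a3, h3⟩ := hdualgen M N hMN hint x hx (x - pM xt) hm0
        rw [polarBilin_apply_apply] at h3
        refine ⟨a1 + a2 - a3, ?_⟩
        have e : pM xt = x - (x - pM xt) := by module
        rw [e, hQsub, _root_.map_sub, _root_.map_add, h1, h2, h3]
      have hQy : ∃ a : 𝒪, algebraMap 𝒪 K a = Q (xt - pM xt) := by
        obtain ⟨a6, h6⟩ := hpart6 xt hxtMt
        obtain ⟨aw, hw⟩ := hQpM
        exact ⟨a6 - aw, by rw [_root_.map_sub, h6, hw]; ring⟩
      have hPy : P ⊔ Submodule.span 𝒪 {xt - pM xt} = P := by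
        refine hP (P ⊔ Submodule.span 𝒪 {xt - pM xt}) le_sup_left ?_ ?_
        · intro z hz
          obtain ⟨q, hq, w, hw, rfl⟩ := Submodule.mem_sup.mp hz
          obtain ⟨c, rfl⟩ := Submodule.mem_span_singleton.mp hw
          refine ⟨n, ?_⟩
          have e : (p : 𝒪) ^ n • (q + c • (xt - pM xt)) =
              (p : 𝒪) ^ n • q + c • ((p : 𝒪) ^ n • (xt - pM xt)) := by module
          rw [e]
          exact P.add_mem (P.smul_mem _ hq) (P.smul_mem c hw2)
        · exact hsupint P (xt - pM xt) (fun s hs => hintt s (hPle hs)) hQy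
            (fun s hs => hyd s hs)
      have hyP : xt - pM xt ∈ P := by
        have : xt - pM xt ∈ P ⊔ Submodule.span 𝒪 {xt - pM xt} :=
          Submodule.mem_sup_right (Submodule.mem_span_singleton_self _)
        rwa [hPy] at this
      have hpMM : pM xt ∈ M := by
        refine hMtM _ ?_ (hpM1 xt)
        have e : pM xt = xt - (xt - pM xt) := by module
        rw [e]
        exact Mt.sub_mem hxtMt (hPle hyP)
      have e : x = pM xt + (x - pM xt) := by module
      rw [e]
      exact M.add_mem hpMM hm0
  exact ⟨hpart1, hpart2, hpart3, hpart4, hpart5, hpart6, hpart7⟩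
end

section
/- Let (L,Q) be a quadratic space over ℤ_(p) (p odd) with L finite free and (L_ℚ,Q) non-degenerate. Then (L,Q) is diagonalizable: L is isometric to an orthogonal direct sum of rank-one quadratic modules ⟨a₁⟩ ⊕ ⋯ ⊕ ⟨a_m⟩ with a_i ∈ ℤ_(p) nonzero. -/
instance zpSpanPrime (p : ℕ) [hp : Fact p.Prime] : (Ideal.span {(p : ℤ)}).IsPrime := by
  rw [Ideal.span_singleton_prime (by exact_mod_cast hp.out.ne_zero)]
  exact Nat.prime_iff_prime_int.mp hp.out

/-- The ring `ℤ_(p)` of integers localized at the prime `p`. -/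
abbrev Zp (p : ℕ) [Fact p.Prime] : Type :=
  Localization.AtPrime (Ideal.span {(p : ℤ)})

section Aux

instance zpNoetherian (p : ℕ) [Fact p.Prime] : IsNoetherianRing (Zp p) :=
  IsLocalization.isNoetherianRing (Ideal.span {(p : ℤ)}).primeCompl _ inferInstance

instance zpDVR (p : ℕ) [Fact p.Prime] : IsDiscreteValuationRing (Zp p) := by
  have : Ideal.span {(p : ℤ)} ≠ ⊥ := by
    simp [Ideal.span_singleton_eq_bot, Nat.cast_eq_zero, (Fact.out : p.Prime).ne_zero]
  exact IsLocalization.AtPrime.isDiscreteValuationRing_of_dedekind_domain ℤ this _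

/-- In a domain which is a valuation ring with well-founded divisibility, any function with a
nonzero value has a value dividing all other values. -/
theorem exists_min_dvd {R : Type*} [CommRing R] [IsDomain R] [ValuationRing R] [WfDvdMonoid R]
    {L : Type*} (Q : L → R) (w₀ : L) (hw₀ : Q w₀ ≠ 0) :
    ∃ v : L, Q v ≠ 0 ∧ ∀ w, Q v ∣ Q w := by
  obtain ⟨r, hrs, hmin⟩ := (_root_.wellFounded_dvdNotUnit (α := R)).has_min
    {r | r ≠ 0 ∧ ∃ w : L, Q w = r} ⟨Q w₀, hw₀, w₀, rfl⟩
  obtain ⟨hr0, v, hv⟩ := hrs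
  subst hv
  refine ⟨v, hr0, fun w => ?_⟩
  by_cases hw : Q w = 0
  · simp [hw]
  rcases ValuationRing.dvd_total (Q v) (Q w) with h1 | h1
  · exact h1
  obtain ⟨u, hu⟩ := h1
  by_cases hunit : IsUnit u
  · refine ⟨↑hunit.unit⁻¹, ?_⟩
    rw [hu, mul_assoc, hunit.mul_val_inv, mul_one]
  · exact absurd ⟨hw, u, hunit, hu⟩ (hmin (Q w) ⟨hw, w, rfl⟩)

open QuadraticMap in
/-- Diagonalisation of quadratic forms over a local valuation domain with invertible 2 and
well-founded divisibility. -/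
theorem diag_aux {R : Type*} [CommRing R] [IsDomain R] [ValuationRing R] [WfDvdMonoid R]
    [IsLocalRing R] [IsNoetherianRing R] [Invertible (2 : R)] :
    ∀ (n : ℕ) (L : Type*) (_ : AddCommGroup L) (_ : Module R L) (_ : Module.Free R L)
      (_ : Module.Finite R L) (Q : QuadraticForm R L)
      (_ : (QuadraticMap.polarBilin Q).Nondegenerate), Module.finrank R L = n →
    ∃ (e : Module.Basis (Fin n) R L) (a : Fin n → R),
      (∀ i j, i ≠ j → polarBilin Q (e i) (e j) = 0) ∧
      (∀ i, Q (e i) = a i) ∧ (∀ i, a i ≠ 0) := by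
  intro n
  induction n with
  | zero =>
    intro L _ _ _ _ Q hnd h
    exact ⟨(Module.finBasis R L).reindex (finCongr h), fun i => 1,
      fun i => i.elim0, fun i => i.elim0, fun i => i.elim0⟩
  | succ n ih =>
    intro L _ _ _ _ Q hnd h
    have h2 : (2 : R) ≠ 0 := (isUnit_of_invertible (2 : R)).ne_zero
    -- some nonzero value of Q exists
    have hnt : Nontrivial L := by
      by_contra hc
      rw [not_nontrivial_iff_subsingleton] at hc
      rw [Module.finrank_zero_of_subsingleton] at h
      exact Nat.succ_ne_zero n h.symm
    have hQne : ∃ w : L, Q w ≠ 0 := by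
      by_contra hq
      push_neg at hq
      obtain ⟨x, hx⟩ := exists_ne (0 : L)
      exact hx (hnd.1 x fun y => by
        simp [polarBilin_apply_apply, QuadraticMap.polar, hq])
    obtain ⟨w₀, hw₀⟩ := hQne
    obtain ⟨v, hv0, hdvd⟩ := exists_min_dvd (fun w : L => Q w) w₀ hw₀
    set b : LinearMap.BilinForm R L := polarBilin Q with hb
    have hbdef : ∀ x y : L, b x y = Q (x + y) - Q x - Q y := fun x y => rfl
    have hQvb : ∀ w : L, Q v ∣ b v w := fun w => by
      rw [hbdef]
      exact dvd_sub (dvd_sub (hdvd _) (hdvd _)) (hdvd _)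
    have hvv : b v v = 2 * Q v := by
      have hv2 : v + v = (2 : R) • v := (two_smul R v).symm
      rw [hbdef, hv2, QuadraticMap.map_smul, smul_eq_mul]
      ring
    set K : Submodule R L := LinearMap.ker (b v) with hK
    have hmemK : ∀ x : L, x ∈ K ↔ b v x = 0 := fun x => LinearMap.mem_ker
    have hsymm : ∀ x y : L, b x y = b y x := fun x y => QuadraticMap.polar_comm Q x y
    have hsp : ∀ z : L, ∃ c : R, z + c • v ∈ K := by
      intro z
      obtain ⟨d, hd⟩ := hQvb z
      refine ⟨-(⅟2 * d), ?_⟩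
      rw [hmemK, map_add, LinearMap.map_smul, hd, smul_eq_mul, hvv]
      have h22 : (⅟2 : R) * 2 = 1 := invOf_mul_self 2
      linear_combination (-(Q v * d)) * h22
    have hli : ∀ (c : R), ∀ x ∈ K, c • v + x = 0 → c = 0 := by
      intro c x hx hcx
      have h0 : b v (c • v + x) = 0 := by rw [hcx, map_zero]
      rw [map_add, LinearMap.map_smul, (hmemK x).mp hx, add_zero, smul_eq_mul, hvv] at h0
      rcases mul_eq_zero.mp h0 with hc | hc
      · exact hc
      · exact absurd hc (mul_ne_zero h2 hv0)
    -- K is finite free of rank n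
    have hcompl : IsCompl (Submodule.span R {v}) K := by
      constructor
      · rw [disjoint_iff]
        ext x
        simp only [Submodule.mem_inf, Submodule.mem_bot]
        constructor
        · rintro ⟨hx1, hx2⟩
          obtain ⟨c, rfl⟩ := Submodule.mem_span_singleton.mp hx1
          have : b v (c • v) = 0 := (hmemK _).mp hx2
          rw [LinearMap.map_smul, smul_eq_mul, hvv] at this
          rcases mul_eq_zero.mp this with hc | hc
          · rw [hc, zero_smul]
          · exact absurd hc (mul_ne_zero h2 hv0)
        · rintro rfl; exact ⟨Submodule.zero_mem _, Submodule.zero_mem _⟩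
      · rw [codisjoint_iff, eq_top_iff]
        intro z _
        obtain ⟨c, hc⟩ := hsp z
        have : z = (-c) • v + (z + c • v) := by rw [neg_smul]; abel
        rw [this]
        exact Submodule.add_mem_sup (Submodule.smul_mem _ _ (Submodule.mem_span_singleton_self v)) hc
    let π : L →ₗ[R] K := Submodule.linearProjOfIsCompl K (Submodule.span R {v}) hcompl.symm
    have : Module.Finite R K := by
      have : IsNoetherian R L := isNoetherian_of_isNoetherianRing_of_finite R L
      exact Module.Finite.iff_fg.mpr (IsNoetherian.noetherian K)
    have : Module.Projective R K :=
      Module.Projective.of_split K.subtype π (by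
        ext x
        simp [π, Submodule.linearProjOfIsCompl, Submodule.projectionOnto_apply_left])
    have : Module.FinitePresentation R K := Module.finitePresentation_of_finite R K
    have hfreeK : Module.Free R K := Module.free_of_flat_of_isLocalRing
    have hrankK : Module.finrank R K = n := by
      have := Module.finrank_eq_card_basis (Module.Basis.mkFinCons v (Module.finBasis R K) hli hsp)
      rw [Fintype.card_fin, h] at this
      omega
    -- the restricted quadratic form
    set Q' : QuadraticForm R K := Q.comp K.subtype with hQ'
    have hQ'app : ∀ x : K, Q' x = Q (x : L) := fun x => rfl
    have hpolar' : ∀ x y : K, polarBilin Q' x y = b (x : L) (y : L) := fun x y => rfl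
    have hrefl : (polarBilin Q').IsRefl := fun x y hxy => by
      rw [show polarBilin Q' y x = polarBilin Q' x y from QuadraticMap.polar_comm Q' y x]
      exact hxy
    have hnd' : (polarBilin Q').Nondegenerate := by
      refine (LinearMap.IsRefl.nondegenerate_iff_separatingLeft hrefl).mpr ?_
      intro x hx
      have hxL : (x : L) = 0 := by
        refine hnd.1 _ fun w => ?_
        obtain ⟨c, hc⟩ := hsp w
        have h1 : b (x : L) (w + c • v) = 0 := hx ⟨w + c • v, hc⟩
        have hxv : b (x : L) v = 0 := by rw [hsymm]; exact (hmemK _).mp x.2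
        rw [map_add, LinearMap.map_smul, hxv, smul_zero, add_zero] at h1
        exact h1
      exact Subtype.ext hxL
    obtain ⟨f, a', hforth, hfval, hfnz⟩ :=
      ih K inferInstance inferInstance hfreeK inferInstance Q' hnd' hrankK
    refine ⟨Module.Basis.mkFinCons v f hli hsp, Fin.cons (Q v) a', ?_, ?_, ?_⟩
    · intro i j hij
      have hcoe : ∀ k, (Module.Basis.mkFinCons v f hli hsp) k
          = (Fin.cons v ((↑) ∘ f) : Fin (n + 1) → L) k :=
        fun k => congrFun (Module.Basis.coe_mkFinCons v f hli hsp) k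
      rcases Fin.eq_zero_or_eq_succ i with rfl | ⟨i', rfl⟩ <;>
        rcases Fin.eq_zero_or_eq_succ j with rfl | ⟨j', rfl⟩
      · exact absurd rfl hij
      · rw [hcoe, hcoe]
        simp only [Fin.cons_zero, Fin.cons_succ, Function.comp_apply]
        exact (hmemK _).mp (f j').2
      · rw [hcoe, hcoe]
        simp only [Fin.cons_zero, Fin.cons_succ, Function.comp_apply]
        rw [show (polarBilin Q) ((f i' : L)) v = b v (f i' : L) from hsymm _ _]
        exact (hmemK _).mp (f i').2
      · rw [hcoe, hcoe]
        simp only [Fin.cons_succ, Function.comp_apply]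
        exact hforth i' j' fun hcon => hij (by rw [hcon])
    · intro i
      have hcoe : ∀ k, (Module.Basis.mkFinCons v f hli hsp) k
          = (Fin.cons v ((↑) ∘ f) : Fin (n + 1) → L) k :=
        fun k => congrFun (Module.Basis.coe_mkFinCons v f hli hsp) k
      rcases Fin.eq_zero_or_eq_succ i with rfl | ⟨i', rfl⟩
      · rw [hcoe]; simp
      · rw [hcoe]
        simp only [Fin.cons_succ, Function.comp_apply]
        exact hfval i'
    · intro i
      rcases Fin.eq_zero_or_eq_succ i with rfl | ⟨i', rfl⟩
      · simpa using hv0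
      · simpa using hfnz i'

end Aux

/-- Let `(L, Q)` be a quadratic space over `ℤ_(p)` (`p` odd) with `L` finite
free and `(L_ℚ, Q)` non-degenerate (equivalently, the polar form of `Q` is non-degenerate over
`ℤ_(p)`).  Then `(L, Q)` is diagonalizable: `L` admits a basis `e₁, …, e_m` which is
orthogonal for `Q` and on which `Q` takes non-zero values, i.e. `L` is isometric to an
orthogonal direct sum `⟨a₁⟩ ⊕ ⋯ ⊕ ⟨a_m⟩` with `aᵢ = Q(eᵢ) ∈ ℤ_(p)` non-zero. -/
theorem stmt_8 (p : ℕ) [Fact p.Prime] (hodd : p ≠ 2)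
    {L : Type*} [AddCommGroup L] [Module (Zp p) L]
    [Module.Free (Zp p) L] [Module.Finite (Zp p) L]
    (Q : QuadraticForm (Zp p) L)
    (hnd : (QuadraticMap.polarBilin Q).Nondegenerate) :
    ∃ (m : ℕ) (e : Module.Basis (Fin m) (Zp p) L) (a : Fin m → Zp p),
      (∀ i j, i ≠ j → QuadraticMap.polarBilin Q (e i) (e j) = 0) ∧
      (∀ i, Q (e i) = a i) ∧
      (∀ i, a i ≠ 0) := by
  have h2 : Invertible (2 : Zp p) := by
    have h2m : (2 : ℤ) ∈ (Ideal.span {(p : ℤ)}).primeCompl := by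
      intro h
      rw [SetLike.mem_coe, Ideal.mem_span_singleton] at h
      have hp2 : (p : ℤ) ∣ 2 := h
      have : p ∣ 2 := by exact_mod_cast hp2
      exact hodd ((Nat.prime_dvd_prime_iff_eq (Fact.out) Nat.prime_two).mp this)
    have := IsLocalization.map_units (M := (Ideal.span {(p : ℤ)}).primeCompl) (Zp p) ⟨2, h2m⟩
    have h : (algebraMap ℤ (Zp p)) 2 = (2 : Zp p) := by norm_num
    rw [h] at this
    exact this.invertible
  obtain ⟨e, a, h1, h2, h3⟩ := diag_aux (Module.finrank (Zp p) L) L inferInstance inferInstance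
    inferInstance inferInstance Q hnd rfl
  exact ⟨Module.finrank (Zp p) L, e, a, h1, h2, h3⟩
end

section
/- Let v ∈ L be an element of a quadratic ℤ_(p)-lattice (L,Q) with (L_ℚ,Q) non-degenerate, such that ν_p(Q(v)) is minimal among all elements of L. Then for all w₁, w₂ ∈ L one has ν_p([w₁,w₂]_Q) ≥ ν_p(Q(v)), and L decomposes as the orthogonal direct sum ⟨v⟩ ⊕ ⟨v⟩^⊥, where the projection of w onto ⟨v⟩^⊥ is w − ([w,v]_Q/[v,v]_Q)·v. -/
lemma zp_inj (p : ℕ) [Fact p.Prime] : Function.Injective (algebraMap ℤ (Zp p)) :=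
  IsLocalization.injective (Zp p) (Ideal.primeCompl_le_nonZeroDivisors (Ideal.span {(p:ℤ)}))

lemma zp_p_ne_zero (p : ℕ) [hp : Fact p.Prime] : (p : Zp p) ≠ 0 := by
  intro h
  have : algebraMap ℤ (Zp p) (p : ℤ) = algebraMap ℤ (Zp p) 0 := by simpa using h
  exact_mod_cast hp.out.ne_zero (by exact_mod_cast zp_inj p this)

lemma zp_factor (p : ℕ) [hp : Fact p.Prime] (x : Zp p) (hx : x ≠ 0) :
    ∃ (k : ℕ) (u : Zp p), IsUnit u ∧ x = u * (p : Zp p) ^ k := by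
  obtain ⟨⟨m, s⟩, hms⟩ := IsLocalization.surj (Ideal.span {(p:ℤ)}).primeCompl x
  simp only at hms
  have hsu : IsUnit (algebraMap ℤ (Zp p) s) := IsLocalization.map_units _ s
  have hm : (m : ℤ) ≠ 0 := by
    rintro rfl
    simp only [map_zero] at hms
    rcases mul_eq_zero.mp hms with h | h
    · exact hx h
    · exact hsu.ne_zero h
  have hfin : FiniteMultiplicity (p : ℤ) m :=
    Int.finiteMultiplicity_iff.2 ⟨by simpa using hp.out.ne_one, hm⟩
  set k := multiplicity (p:ℤ) m with hk
  obtain ⟨c, hc, hcd⟩ := hfin.exists_eq_pow_mul_and_not_dvd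
  rw [← hk] at hc
  have hcu : IsUnit (algebraMap ℤ (Zp p) c) := by
    refine (IsLocalization.AtPrime.isUnit_to_map_iff (Zp p) (Ideal.span {(p:ℤ)}) c).2 ?_
    simpa [Ideal.primeCompl, Ideal.mem_span_singleton] using hcd
  refine ⟨k, algebraMap ℤ (Zp p) c * ↑hsu.unit⁻¹, (hcu.mul hsu.unit⁻¹.isUnit), ?_⟩
  have hx2 : x * algebraMap ℤ (Zp p) s = algebraMap ℤ (Zp p) c * (p : Zp p) ^ k := by
    rw [hms, hc]; push_cast; ring
  have := congrArg (· * (↑hsu.unit⁻¹ : Zp p)) hx2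
  simp only [mul_assoc] at this ⊢
  rw [mul_comm ((p:Zp p)^k)] at this
  simpa [IsUnit.mul_val_inv, hsu.unit_spec, mul_comm, mul_assoc, mul_left_comm] using this

lemma zp_p_not_unit (p : ℕ) [Fact p.Prime] : ¬ IsUnit ((p : ℕ) : Zp p) := by
  have : ((p:ℕ) : Zp p) = algebraMap ℤ (Zp p) (p:ℤ) := by simp
  rw [this, IsLocalization.AtPrime.isUnit_to_map_iff (Zp p) (Ideal.span {(p:ℤ)})]
  simp [Ideal.primeCompl, Ideal.mem_span_singleton]

lemma zp_dvd_of_forall (p : ℕ) [Fact p.Prime] (a b : Zp p) (ha : a ≠ 0)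
    (h : ∀ k : ℕ, (p : Zp p) ^ k ∣ a → (p : Zp p) ^ k ∣ b) : a ∣ b := by
  obtain ⟨k, u, hu, rfl⟩ := zp_factor p a ha
  have hd : (p : Zp p) ^ k ∣ b := h k ⟨u, mul_comm _ _⟩
  exact (hu.mul_left_dvd).mpr hd

lemma zp_zero_of_forall (p : ℕ) [Fact p.Prime] (b : Zp p)
    (h : ∀ k : ℕ, (p : Zp p) ^ k ∣ b) : b = 0 := by
  by_contra hb
  obtain ⟨k, u, hu, rfl⟩ := zp_factor p b hb
  obtain ⟨c, hc⟩ := h (k + 1)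
  rw [pow_succ, mul_comm u, mul_assoc] at hc
  have : u = (p : Zp p) * c := mul_left_cancel₀ (pow_ne_zero _ (zp_p_ne_zero p)) hc
  exact zp_p_not_unit p (isUnit_of_mul_isUnit_left (this ▸ hu))

/-- Let `v ∈ L` be an element of a quadratic `ℤ_(p)`-lattice `(L, Q)` with
`(L_ℚ, Q)` non-degenerate, such that `ν_p(Q v)` is minimal among all elements of `L`
(expressed via divisibility: every power of `p` dividing `Q v` divides `Q w` for all `w`).
Then for all `w₁, w₂ ∈ L` one has `ν_p([w₁, w₂]_Q) ≥ ν_p(Q v)`; the projection of `w` onto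
`⟨v⟩^⊥` is `w − ([w,v]_Q/[v,v]_Q) • v` (the quotient makes sense in `ℤ_(p)`); and `L`
decomposes as the orthogonal direct sum `⟨v⟩ ⊕ ⟨v⟩^⊥`. -/
theorem stmt_9 (p : ℕ) [Fact p.Prime] (hodd : p ≠ 2)
    {L : Type*} [AddCommGroup L] [Module (Zp p) L] [Nontrivial L]
    [Module.Free (Zp p) L] [Module.Finite (Zp p) L]
    (Q : QuadraticForm (Zp p) L)
    (hnd : (QuadraticMap.polarBilin Q).Nondegenerate)
    (v : L)
    (hmin : ∀ w : L, ∀ kk : ℕ, (p : Zp p) ^ kk ∣ Q v → (p : Zp p) ^ kk ∣ Q w) :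
    (∀ w₁ w₂ : L, ∀ kk : ℕ,
        (p : Zp p) ^ kk ∣ Q v → (p : Zp p) ^ kk ∣ QuadraticMap.polarBilin Q w₁ w₂) ∧
    (∀ w : L, ∃ c : Zp p,
        QuadraticMap.polarBilin Q w v = c * QuadraticMap.polarBilin Q v v ∧
        QuadraticMap.polarBilin Q (w - c • v) v = 0) ∧
    IsCompl (Submodule.span (Zp p) {v}) (LinearMap.ker (QuadraticMap.polarBilin Q v)) := by
  -- Part 1
  have part1 : ∀ w₁ w₂ : L, ∀ kk : ℕ,
      (p : Zp p) ^ kk ∣ Q v → (p : Zp p) ^ kk ∣ QuadraticMap.polarBilin Q w₁ w₂ := by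
    intro w₁ w₂ kk hk
    have h1 := hmin (w₁ + w₂) kk hk
    have h2 := hmin w₁ kk hk
    have h3 := hmin w₂ kk hk
    simpa [QuadraticMap.polarBilin_apply_apply, QuadraticMap.polar] using (h1.sub h2).sub h3
  -- Q v ≠ 0
  have hQv : Q v ≠ 0 := by
    intro h0
    have hall : ∀ w : L, Q w = 0 := fun w =>
      zp_zero_of_forall p _ (fun k => hmin w k (by simp [h0]))
    have hpolar0 : ∀ x y : L, QuadraticMap.polarBilin Q x y = 0 := by
      intro x y
      simp [QuadraticMap.polarBilin_apply_apply, QuadraticMap.polar, hall]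
    obtain ⟨x, hx⟩ := exists_ne (0 : L)
    exact hx (hnd.1 x (fun y => hpolar0 x y))
  -- 2 is a unit
  have h2u : IsUnit (2 : Zp p) := by
    have : (2 : Zp p) = algebraMap ℤ (Zp p) 2 := by simp
    rw [this, IsLocalization.AtPrime.isUnit_to_map_iff (Zp p) (Ideal.span {(p:ℤ)})]
    simp only [Ideal.primeCompl, Submonoid.mem_mk, Subsemigroup.mem_mk, Set.mem_compl_iff,
      SetLike.mem_coe, Ideal.mem_span_singleton]
    intro hdvd
    have hp2 : p ∣ 2 := by exact_mod_cast hdvd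
    exact hodd ((Nat.prime_dvd_prime_iff_eq Fact.out Nat.prime_two).mp hp2)
  -- polar self
  have hself : QuadraticMap.polarBilin Q v v = 2 * Q v := by
    rw [QuadraticMap.polarBilin_apply_apply, QuadraticMap.polar_self, two_smul, two_mul]
  have hkey : (↑h2u.unit⁻¹ : Zp p) * 2 = 1 := h2u.val_inv_mul
  -- Part 2
  have part2 : ∀ w : L, ∃ c : Zp p,
      QuadraticMap.polarBilin Q w v = c * QuadraticMap.polarBilin Q v v ∧
      QuadraticMap.polarBilin Q (w - c • v) v = 0 := by
    intro w
    have hdvd : Q v ∣ QuadraticMap.polarBilin Q w v :=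
      zp_dvd_of_forall p _ _ hQv (fun k hk => part1 w v k hk)
    obtain ⟨d, hd⟩ := hdvd
    refine ⟨d * ↑h2u.unit⁻¹, ?_, ?_⟩
    · rw [hself, hd]
      linear_combination (-(d * Q v)) * hkey
    · have : QuadraticMap.polarBilin Q (w - (d * ↑h2u.unit⁻¹) • v) v =
          QuadraticMap.polarBilin Q w v - (d * ↑h2u.unit⁻¹) * QuadraticMap.polarBilin Q v v := by
        simp [map_sub, LinearMap.sub_apply, LinearMap.map_smul, smul_eq_mul]
      rw [this, hself, hd]
      linear_combination (-(d * Q v)) * hkey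
  refine ⟨part1, part2, ?_⟩
  have h2Qv : (2 : Zp p) * Q v ≠ 0 := mul_ne_zero h2u.ne_zero hQv
  constructor
  · rw [Submodule.disjoint_def]
    intro x hx hker
    obtain ⟨a, rfl⟩ := Submodule.mem_span_singleton.mp hx
    rw [LinearMap.mem_ker] at hker
    have : a * (2 * Q v) = 0 := by
      rw [← hself]
      simpa [LinearMap.map_smul, smul_eq_mul] using hker
    rcases mul_eq_zero.mp this with h | h
    · simp [h]
    · exact absurd h h2Qv
  · rw [codisjoint_iff, eq_top_iff]
    intro w _
    obtain ⟨c, _, hc2⟩ := part2 w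
    refine Submodule.mem_sup.mpr ⟨c • v, Submodule.mem_span_singleton.mpr ⟨c, rfl⟩,
      w - c • v, ?_, by abel⟩
    rw [LinearMap.mem_ker]
    rw [show (QuadraticMap.polarBilin Q v) (w - c • v) =
        (QuadraticMap.polarBilin Q (w - c • v)) v from ?_]
    · exact hc2
    · simp only [QuadraticMap.polarBilin_apply_apply]
      exact QuadraticMap.polar_comm _ _ _
end

section
/- Let W = W(k) for k algebraically closed of characteristic p > 2, let L_cris be a finite free self-dual quadratic W-module, and let L' ⊂ L_cris be a direct summand such that the quadratic form restricted to L' is not divisible by p. Let F¹L̄ ⊂ L' ⊗ k be an isotropic line. Then there exists an isotropic line F¹(L' ⊗ 𝒪_𝔏) ⊂ L' ⊗ 𝒪_𝔏 lifting F¹L̄, where 𝒪_𝔏 = W[√p]. -/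
set_option linter.unusedSectionVars false
set_option linter.unusedVariables false
set_option maxHeartbeats 1000000

open Polynomial
open scoped TensorProduct

namespace S17

variable {p : ℕ} [Fact p.Prime] {k : Type*} [Field k] [CharP k p] [PerfectRing k p]

local notation "W" => WittVector p k
local notation "O" => AdjoinRoot ((X : Polynomial (WittVector p k)) ^ 2 - C ((p : WittVector p k)))
local notation "π" => AdjoinRoot.root ((X : Polynomial (WittVector p k)) ^ 2 - C ((p : WittVector p k)))

lemma constantCoeff_p : WittVector.constantCoeff ((p : W)) = 0 := by
  rw [map_natCast, CharP.cast_eq_zero]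

lemma dvd_of_not_isUnit {x : W} (h : ¬ IsUnit x) : (p : W) ∣ x := by
  rcases eq_or_ne x 0 with rfl | hx
  · exact dvd_zero _
  · obtain ⟨m, u, rfl⟩ := WittVector.exists_eq_pow_p_mul' x hx
    cases m with
    | zero => exact absurd (by simpa using u.isUnit) h
    | succ m =>
      exact dvd_mul_of_dvd_left (dvd_pow_self _ (Nat.succ_ne_zero m)) _

lemma isUnit_of_not_dvd {x : W} (h : ¬ (p : W) ∣ x) : IsUnit x := by
  by_contra hu; exact h (dvd_of_not_isUnit hu)

lemma constantCoeff_eq_zero_of_dvd {x : W} (h : (p : W) ∣ x) :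
    WittVector.constantCoeff x = 0 := by
  obtain ⟨y, rfl⟩ := h
  rw [map_mul, constantCoeff_p, zero_mul]

lemma constantCoeff_ne_zero_of_isUnit {x : W} (h : IsUnit x) :
    WittVector.constantCoeff x ≠ 0 :=
  (h.map WittVector.constantCoeff).ne_zero

lemma dvd_iff_constantCoeff {x : W} : (p : W) ∣ x ↔ WittVector.constantCoeff x = 0 := by
  constructor
  · exact constantCoeff_eq_zero_of_dvd
  · intro h
    apply dvd_of_not_isUnit
    intro hu
    exact constantCoeff_ne_zero_of_isUnit hu h

lemma iterate_verschiebung_coeff_eq_zero (z : W) :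
    ∀ {n i : ℕ}, i < n → (WittVector.verschiebung^[n] z).coeff i = 0 := by
  intro n
  induction n with
  | zero => omega
  | succ n ih =>
    intro i hi
    rw [Function.iterate_succ_apply']
    cases i with
    | zero => exact WittVector.verschiebung_coeff_zero _
    | succ i =>
      rw [WittVector.verschiebung_coeff_succ]
      exact ih (by omega)

lemma mul_pow_charP_eq (z : W) (n : ℕ) :
    z * (p : W) ^ n = WittVector.verschiebung^[n] (WittVector.frobenius^[n] z) := by
  induction n with
  | zero => simp
  | succ n ih =>
    have hcomm := WittVector.verschiebung_frobenius_comm (p := p) (R := k)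
    calc z * (p : W) ^ (n + 1) = (z * (p:W)^n) * p := by ring
    _ = WittVector.verschiebung (WittVector.frobenius (WittVector.verschiebung^[n] (WittVector.frobenius^[n] z))) := by
        rw [ih, WittVector.verschiebung_frobenius]
    _ = WittVector.verschiebung (WittVector.verschiebung^[n] (WittVector.frobenius (WittVector.frobenius^[n] z))) := by
        rw [(hcomm.symm.iterate_right n) _]
    _ = _ := by
        rw [← Function.iterate_succ_apply' (⇑WittVector.verschiebung),
          ← Function.iterate_succ_apply' (⇑WittVector.frobenius)]

lemma mem_span_p_pow_iff (x : W) (n : ℕ) :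
    x ∈ Ideal.span {(p : W) ^ n} ↔ ∀ i < n, x.coeff i = 0 := by
  rw [Ideal.mem_span_singleton]
  constructor
  · rintro ⟨y, rfl⟩
    intro i hi
    rw [mul_comm, mul_pow_charP_eq]
    exact iterate_verschiebung_coeff_eq_zero _ hi
  · intro h
    obtain ⟨z, hz⟩ := ((WittVector.frobenius_bijective p k).surjective.iterate n) (x.shift n)
    refine ⟨z, ?_⟩
    rw [mul_comm, mul_pow_charP_eq, hz, ← WittVector.eq_iterate_verschiebung h]


lemma smod_iff (x : W) (n : ℕ) :
    x ∈ (Ideal.span {(p : W)} ^ n • ⊤ : Ideal W) ↔ ∀ i < n, x.coeff i = 0 := by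
  rw [smul_eq_mul, Ideal.mul_top, Ideal.span_singleton_pow, mem_span_p_pow_iff]

lemma isAdicComplete : IsAdicComplete (Ideal.span {(p : W)}) W := by
  have h1 : IsHausdorff (Ideal.span {(p : W)}) W := by
    constructor
    intro x hx
    ext i
    have := (smod_iff x (i + 1)).mp (by simpa [SModEq.zero] using hx (i + 1))
    simpa using this i (lt_add_one i)
  have h2 : IsPrecomplete (Ideal.span {(p : W)}) W := by
    constructor
    intro f hf
    refine ⟨WittVector.mk p (fun i => (f (i + 1)).coeff i), fun n => ?_⟩
    rw [SModEq.sub_mem]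
    have key : ∀ i < n, (f n).coeff i = (f (i + 1)).coeff i := by
      intro i hi
      have ha : f (i + 1) - f n ∈ RingHom.ker (WittVector.truncate (i + 1)) := by
        rw [WittVector.mem_ker_truncate]
        exact (smod_iff _ (i + 1)).mp (SModEq.sub_mem.mp (hf (by omega)))
      have hb : WittVector.truncate (i + 1) (f (i + 1)) = WittVector.truncate (i + 1) (f n) :=
        (RingHom.sub_mem_ker_iff _).mp ha
      have := congrArg (fun z => TruncatedWittVector.coeff (⟨i, lt_add_one i⟩ : Fin (i + 1)) z) hb
      simpa [WittVector.coeff_truncate] using this.symm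
    refine (smod_iff _ n).mpr ?_
    intro i hi
    have h3 : f n - WittVector.mk p (fun i => (f (i + 1)).coeff i) ∈
        RingHom.ker (WittVector.truncate n) := by
      rw [RingHom.sub_mem_ker_iff]
      apply TruncatedWittVector.ext
      intro j
      rw [WittVector.coeff_truncate, WittVector.coeff_truncate]
      simpa using (key j j.2).trans rfl
    exact (WittVector.mem_ker_truncate _ _).mp h3 i hi
  exact { toIsHausdorff := h1, toIsPrecomplete := h2 }


lemma exists_sq_of_isUnit [IsAlgClosed k] (hp2 : 2 < p) {u : W} (hu : IsUnit u) :
    ∃ s : W, s * s = u := by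
  haveI := isAdicComplete (p := p) (k := k)
  have h2k : (2 : k) ≠ 0 := by
    have : ((2 : ℕ) : k) ≠ 0 := by
      rw [Ne, CharP.cast_eq_zero_iff k p]
      exact fun hd => by have := Nat.le_of_dvd (by norm_num) hd; omega
    simpa using this
  obtain ⟨s₀, hs₀⟩ := IsAlgClosed.exists_pow_nat_eq (WittVector.constantCoeff u) (n := 2)
    (by norm_num)
  have hu0 : WittVector.constantCoeff u ≠ 0 := constantCoeff_ne_zero_of_isUnit hu
  have hs₀0 : s₀ ≠ 0 := by
    intro h; rw [h] at hs₀; simp at hs₀; exact hu0 hs₀.symm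
  set a₀ : W := WittVector.teichmuller p s₀ with ha₀
  have ha₀c : WittVector.constantCoeff a₀ = s₀ := by
    rw [ha₀, WittVector.constantCoeff_apply, WittVector.teichmuller_coeff_zero]
  have hmonic : ((X : W[X]) ^ 2 - C u).Monic := monic_X_pow_sub_C u (by norm_num)
  obtain ⟨a, ha1, _⟩ := HenselianRing.is_henselian (I := Ideal.span {(p : W)})
    ((X : W[X]) ^ 2 - C u) hmonic a₀
    (by
      rw [Ideal.mem_span_singleton, dvd_iff_constantCoeff]
      simp only [eval_sub, eval_pow, eval_X, eval_C, map_sub, map_pow, ha₀c]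
      rw [hs₀, sub_self])
    (by
      apply IsUnit.map
      apply isUnit_of_not_dvd
      rw [dvd_iff_constantCoeff]
      simp only [derivative_sub, derivative_C, derivative_X_pow, sub_zero, eval_mul, eval_pow,
        eval_X, eval_C, map_mul, map_pow, ha₀c]
      intro h
      rcases mul_eq_zero.mp h with h | h
      · rw [map_natCast] at h; exact h2k (by exact_mod_cast h)
      · exact hs₀0 (by simpa using h))
  refine ⟨a, ?_⟩
  have := ha1
  simp only [Polynomial.IsRoot, eval_sub, eval_pow, eval_X, eval_C, sub_eq_zero] at this
  rw [← this]; ring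


lemma root_sq : π ^ 2 = algebraMap W O (p : W) := by
  have h := AdjoinRoot.mk_self (f := (X : Polynomial W) ^ 2 - C ((p : W)))
  rw [map_sub, map_pow, AdjoinRoot.mk_X, AdjoinRoot.mk_C, sub_eq_zero] at h
  exact h

lemma O_repr (x : O) : ∃ a b : W, x = algebraMap W O a + algebraMap W O b * π := by
  obtain ⟨q, rfl⟩ := AdjoinRoot.mk_surjective x
  have hmonic : ((X : Polynomial W) ^ 2 - C ((p : W))).Monic :=
    monic_X_pow_sub_C _ (by norm_num)
  have hdeg : ((X : Polynomial W) ^ 2 - C ((p : W))).degree = 2 := by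
    simpa using degree_X_pow_sub_C (n := 2) (by norm_num) ((p : W))
  set f := (X : Polynomial W) ^ 2 - C ((p : W)) with hf
  have hmod : AdjoinRoot.mk f q = AdjoinRoot.mk f (q %ₘ f) := by
    conv_lhs => rw [← modByMonic_add_div q f]
    rw [map_add, map_mul, AdjoinRoot.mk_self, zero_mul, add_zero]
  have hdeglt : (q %ₘ f).degree ≤ 1 := by
    have := degree_modByMonic_lt q hmonic
    rw [hdeg] at this
    exact Order.le_of_lt_succ (by exact_mod_cast this)
  refine ⟨(q %ₘ f).coeff 0, (q %ₘ f).coeff 1, ?_⟩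
  rw [hmod]
  conv_lhs => rw [eq_X_add_C_of_degree_le_one hdeglt]
  rw [map_add, map_mul, AdjoinRoot.mk_C, AdjoinRoot.mk_C, AdjoinRoot.mk_X]
  rw [AdjoinRoot.algebraMap_eq]
  ring

noncomputable def rho : O →+* k :=
  AdjoinRoot.lift (WittVector.constantCoeff) 0 (by
    rw [eval₂_sub, eval₂_pow, eval₂_X, eval₂_C, constantCoeff_p]
    ring)

lemma rho_alg (a : W) : rho (algebraMap W O a) = WittVector.constantCoeff a :=
  AdjoinRoot.lift_of _

lemma rho_root : rho (π : O) = 0 := by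
  unfold rho
  exact AdjoinRoot.lift_root _

lemma isUnit_of_rho_ne_zero {x : O} (h : rho x ≠ 0) : IsUnit x := by
  obtain ⟨a, b, rfl⟩ := O_repr x
  rw [map_add, map_mul, rho_alg, rho_alg, rho_root, mul_zero, add_zero] at h
  have hmul : (algebraMap W O a + algebraMap W O b * π) *
      (algebraMap W O a - algebraMap W O b * π) = algebraMap W O (a * a - b * b * p) := by
    have : (algebraMap W O a + algebraMap W O b * π) * (algebraMap W O a - algebraMap W O b * π)
        = algebraMap W O a * algebraMap W O a - algebraMap W O b * algebraMap W O b * π ^ 2 := by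
      ring
    rw [this, root_sq, map_sub, map_mul, map_mul, map_mul]
  have hunit : IsUnit (a * a - b * b * (p : W)) := by
    apply isUnit_of_not_dvd
    rw [dvd_iff_constantCoeff, map_sub, map_mul, map_mul, map_mul, constantCoeff_p, mul_zero,
      sub_zero]
    exact fun hc => h (by rcases mul_self_eq_zero.mp hc with h' ; exact h')
  exact isUnit_of_mul_isUnit_left (by rw [hmul]; exact hunit.map (algebraMap W O))

lemma exists_root_mul_of_rho_eq_zero {x : O} (h : rho x = 0) : ∃ t : O, x = π * t := by
  obtain ⟨a, b, rfl⟩ := O_repr x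
  rw [map_add, map_mul, rho_alg, rho_alg, rho_root, mul_zero, add_zero] at h
  have hdvd : (p : W) ∣ a := dvd_iff_constantCoeff.mpr h
  obtain ⟨a', rfl⟩ := hdvd
  refine ⟨π * algebraMap W O a' + algebraMap W O b, ?_⟩
  have : (π : O) * (π * algebraMap W O a') = π ^ 2 * algebraMap W O a' := by ring
  rw [mul_add, this, root_sq, ← map_mul]
  ring

lemma exists_sqrt [IsAlgClosed k] (hp2 : 2 < p) (x : W) :
    ∃ r : O, r * r = algebraMap W O x := by
  rcases eq_or_ne x 0 with rfl | hx
  · exact ⟨0, by simp⟩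
  · obtain ⟨m, u, rfl⟩ := WittVector.exists_eq_pow_p_mul' x hx
    obtain ⟨s, hs⟩ := exists_sq_of_isUnit hp2 u.isUnit
    refine ⟨π ^ m * algebraMap W O s, ?_⟩
    have : (π ^ m * algebraMap W O s) * (π ^ m * algebraMap W O s)
        = (π ^ 2) ^ m * (algebraMap W O s * algebraMap W O s) := by ring
    rw [this, root_sq, ← map_mul, ← map_pow, ← map_mul, hs]


end S17

open S17 in
/-- Let `W = W(k)` for `k` algebraically closed of characteristic `p > 2`,
let `L_cris` be a finite free self-dual quadratic `W`-module, and let `L' ⊆ L_cris` be a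
direct summand such that the quadratic form restricted to `L'` is not divisible by `p`.
Let `F¹L̄ ⊆ L' ⊗ k` be an isotropic line, spanned by the reduction of a primitive vector
`v ∈ L'` with `Q v ≡ 0 (mod p)` (recall that the maximal ideal of `W(k)` is `(p)`).  Then
there exists an isotropic line `F¹(L' ⊗ 𝒪_𝔏) ⊆ L' ⊗ 𝒪_𝔏` lifting `F¹L̄`, where
`𝒪_𝔏 = W[√p]`: i.e. there is `y ∈ L' ⊗ 𝒪_𝔏` spanning a direct summand line, isotropic
for the base-changed form, and congruent to `1 ⊗ v` modulo the maximal ideal `(√p)`. -/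
theorem stmt_17 {p : ℕ} [Fact p.Prime] (hp2 : 2 < p)
    {k : Type*} [Field k] [IsAlgClosed k] [CharP k p] [PerfectRing k p]
    [Invertible (2 : WittVector p k)]
    {M : Type*} [AddCommGroup M] [Module (WittVector p k) M]
    [Module.Free (WittVector p k) M] [Module.Finite (WittVector p k) M]
    (Q : QuadraticForm (WittVector p k) M)
    (hselfdual : Function.Bijective ⇑(QuadraticMap.polarBilin Q))
    (L' : Submodule (WittVector p k) M) (hsummand : ∃ N, IsCompl L' N)
    (hnotdiv : ∃ x ∈ L', ¬ ((p : WittVector p k) ∣ Q x))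
    (v : M) (hvL : v ∈ L')
    (hprim : ¬ ∃ z : M, v = (p : WittVector p k) • z)
    (hiso : (p : WittVector p k) ∣ Q v) :
    ∃ y : (AdjoinRoot ((Polynomial.X : Polynomial (WittVector p k)) ^ 2 -
        Polynomial.C ((p : WittVector p k)))) ⊗[WittVector p k] M,
      y ∈ Submodule.span (AdjoinRoot ((Polynomial.X : Polynomial (WittVector p k)) ^ 2 -
          Polynomial.C ((p : WittVector p k))))
        ((fun x : M => (1 : AdjoinRoot ((Polynomial.X : Polynomial (WittVector p k)) ^ 2 -
          Polynomial.C ((p : WittVector p k)))) ⊗ₜ[WittVector p k] x) '' L') ∧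
      (QuadraticForm.baseChange (AdjoinRoot ((Polynomial.X : Polynomial (WittVector p k)) ^ 2 -
          Polynomial.C ((p : WittVector p k)))) Q) y = 0 ∧
      (∃ z, y - (1 : AdjoinRoot ((Polynomial.X : Polynomial (WittVector p k)) ^ 2 -
          Polynomial.C ((p : WittVector p k)))) ⊗ₜ[WittVector p k] v =
          (AdjoinRoot.root ((Polynomial.X : Polynomial (WittVector p k)) ^ 2 -
            Polynomial.C ((p : WittVector p k)))) • z) ∧
      (∃ N', IsCompl (Submodule.span (AdjoinRoot ((Polynomial.X : Polynomial (WittVector p k)) ^ 2 -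
          Polynomial.C ((p : WittVector p k)))) {y}) N') := by
  classical
  set W' := WittVector p k
  set O' := AdjoinRoot ((Polynomial.X : Polynomial (WittVector p k)) ^ 2 -
      Polynomial.C ((p : WittVector p k))) with hO'
  obtain ⟨u, huL, hu⟩ := hnotdiv
  have hA : IsUnit (Q u) := isUnit_of_not_dvd hu
  obtain ⟨c, hc⟩ := hiso
  set B : W' := QuadraticMap.polar ⇑Q v u with hB
  set D : W' := B * B - 4 * Q u * c * (p : W') with hD
  obtain ⟨r, hr⟩ := exists_sqrt (k := k) hp2 D
  -- fix the sign of the square root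
  have hrr : rho r * rho r
      = WittVector.constantCoeff B * WittVector.constantCoeff B := by
    have := congrArg (rho) hr
    rw [map_mul, rho_alg] at this
    rw [this, hD]
    simp only [map_sub, map_mul, map_natCast, CharP.cast_eq_zero, mul_zero, sub_zero]
  obtain ⟨r', hr', hρr'⟩ : ∃ r' : O', r' * r' = algebraMap W' O' D ∧
      rho r' = WittVector.constantCoeff B := by
    rcases mul_self_eq_mul_self_iff.mp hrr with h | h
    · exact ⟨r, hr, h⟩
    · exact ⟨-r, by rw [neg_mul_neg]; exact hr, by rw [map_neg, h, neg_neg]⟩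
  -- the unit 2 * Q u
  have h2A : IsUnit ((2 : W') * Q u) := (isUnit_of_invertible (2 : W')).mul hA
  have halg2A : IsUnit (algebraMap W' O' ((2 : W') * Q u)) := h2A.map _
  set U := halg2A.unit with hU
  set T : O' := ↑U⁻¹ * (r' - algebraMap W' O' B) with hT
  have hTs : algebraMap W' O' ((2 : W') * Q u) * T = r' - algebraMap W' O' B := by
    rw [hT, ← mul_assoc, ← halg2A.unit_spec, Units.mul_inv, one_mul]
  have hρT : rho T = 0 := by
    rw [hT, map_mul, map_sub, rho_alg, hρr', sub_self, mul_zero]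
  obtain ⟨t, hTt⟩ := exists_root_mul_of_rho_eq_zero hρT
  -- the key quadratic equation
  have hkey : algebraMap W' O' (Q u) * (T * T) + algebraMap W' O' B * T
      + algebraMap W' O' (Q v) = 0 := by
    have h4 : IsUnit (algebraMap W' O' ((2 : W') * Q u) * algebraMap W' O' ((2 : W') * Q u)) :=
      halg2A.mul halg2A
    rw [← h4.mul_right_eq_zero]
    have hQv : algebraMap W' O' (Q v) = algebraMap W' O' (p : W') * algebraMap W' O' c := by
      rw [← map_mul, hc]
    have hDD : algebraMap W' O' D = algebraMap W' O' B * algebraMap W' O' B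
        - 4 * algebraMap W' O' (Q u) * algebraMap W' O' c * algebraMap W' O' (p : W') := by
      rw [hD]; push_cast [map_sub, map_mul, map_ofNat]; ring
    have h2A' : algebraMap W' O' ((2 : W') * Q u) = 2 * algebraMap W' O' (Q u) := by
      rw [map_mul, map_ofNat]
    rw [hDD] at hr'
    rw [h2A'] at hTs ⊢
    rw [hQv]
    linear_combination (algebraMap W' O' (Q u) * (2 * algebraMap W' O' (Q u) * T)
      + algebraMap W' O' (Q u) * (r' - algebraMap W' O' B)
      + 2 * algebraMap W' O' (Q u) * algebraMap W' O' B) * hTs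
      + algebraMap W' O' (Q u) * hr'
  -- the element y
  set y : O' ⊗[W'] M := (1 : O') ⊗ₜ[W'] v + T • ((1 : O') ⊗ₜ[W'] u) with hy
  -- the functional
  set b := Module.Free.chooseBasis W' M with hb
  have hex : ∃ i, ¬ (p : W') ∣ b.repr v i := by
    by_contra hno
    push_neg at hno
    choose g hg using hno
    exact hprim ⟨∑ i, g i • b i, by
      rw [Finset.smul_sum]
      simp only [smul_smul, ← hg]
      exact (b.sum_repr v).symm⟩
  obtain ⟨i₀, hi₀⟩ := hex
  have hφv : IsUnit (b.coord i₀ v) := by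
    rw [Module.Basis.coord_apply]; exact isUnit_of_not_dvd hi₀
  set Φ : O' ⊗[W'] M →ₗ[O'] O' :=
    (Algebra.TensorProduct.rid W' O' O').toLinearMap.comp
      (LinearMap.baseChange O' (b.coord i₀)) with hΦ
  have hΦtmul : ∀ (a : O') (m : M), Φ (a ⊗ₜ[W'] m) = algebraMap W' O' (b.coord i₀ m) * a := by
    intro a m
    rw [hΦ]
    simp only [LinearMap.comp_apply, LinearMap.baseChange_tmul, AlgEquiv.toLinearMap_apply,
      Algebra.TensorProduct.rid_tmul, Algebra.smul_def]
  have hΦy : Φ y = algebraMap W' O' (b.coord i₀ v)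
      + T * algebraMap W' O' (b.coord i₀ u) := by
    rw [hy, map_add, map_smul, hΦtmul, hΦtmul, mul_one, mul_one, smul_eq_mul, mul_comm]
  have hUy : IsUnit (Φ y) := by
    apply isUnit_of_rho_ne_zero
    rw [hΦy, map_add, map_mul, rho_alg, hρT, zero_mul, add_zero]
    exact constantCoeff_ne_zero_of_isUnit hφv
  refine ⟨y, ?_, ?_, ?_, ?_⟩
  · -- membership in the span
    apply Submodule.add_mem
    · exact Submodule.subset_span ⟨v, hvL, rfl⟩
    · exact Submodule.smul_mem _ _ (Submodule.subset_span ⟨u, huL, rfl⟩)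
  · -- isotropy
    haveI : Invertible (2 : O') :=
      (Invertible.map (algebraMap W' O') (2 : W')).copy _ (by rw [map_ofNat])
    have hexpand : (QuadraticForm.baseChange O' Q) y
        = (QuadraticForm.baseChange O' Q) ((1 : O') ⊗ₜ[W'] v)
          + (QuadraticForm.baseChange O' Q) (T • ((1 : O') ⊗ₜ[W'] u))
          + QuadraticMap.polar (⇑(QuadraticForm.baseChange O' Q))
              ((1 : O') ⊗ₜ[W'] v) (T • ((1 : O') ⊗ₜ[W'] u)) := by
      rw [hy, QuadraticMap.polar]; ring
    have h1 : (QuadraticForm.baseChange O' Q) ((1 : O') ⊗ₜ[W'] v) = algebraMap W' O' (Q v) := by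
      rw [QuadraticForm.baseChange_tmul, mul_one, Algebra.algebraMap_eq_smul_one]
    have h2 : (QuadraticForm.baseChange O' Q) (T • ((1 : O') ⊗ₜ[W'] u))
        = algebraMap W' O' (Q u) * (T * T) := by
      rw [QuadraticMap.map_smul, QuadraticForm.baseChange_tmul, mul_one, smul_eq_mul,
        Algebra.smul_def, mul_one]
      ring
    have h3 : QuadraticMap.polar (⇑(QuadraticForm.baseChange O' Q))
        ((1 : O') ⊗ₜ[W'] v) (T • ((1 : O') ⊗ₜ[W'] u)) = T * algebraMap W' O' B := by
      have hinner : QuadraticMap.polar (⇑(QuadraticForm.baseChange O' Q))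
          ((1 : O') ⊗ₜ[W'] v) ((1 : O') ⊗ₜ[W'] u) = algebraMap W' O' B := by
        rw [← QuadraticMap.polarBilin_apply_apply, QuadraticForm.polarBilin_baseChange,
          LinearMap.BilinForm.baseChange_tmul, mul_one, QuadraticMap.polarBilin_apply_apply,
          ← hB, Algebra.algebraMap_eq_smul_one]
      rw [QuadraticMap.polar_smul_right, hinner, smul_eq_mul]
    rw [hexpand, h1, h2, h3]
    linear_combination hkey
  · -- congruence mod root
    refine ⟨t • ((1 : O') ⊗ₜ[W'] u), ?_⟩
    rw [hy, add_sub_cancel_left, hTt, mul_smul]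
  · -- direct summand
    refine ⟨LinearMap.ker Φ, ?_, ?_⟩
    · rw [Submodule.disjoint_def]
      intro x hx hker
      obtain ⟨a, rfl⟩ := Submodule.mem_span_singleton.mp hx
      have h0 : a * Φ y = 0 := by
        simpa [map_smul, smul_eq_mul] using hker
      rw [hUy.mul_left_eq_zero] at h0
      rw [h0, zero_smul]
    · rw [codisjoint_iff, eq_top_iff]
      rintro x -
      set e := hUy.unit with he
      refine Submodule.mem_sup.mpr ⟨(Φ x * ↑e⁻¹) • y,
        Submodule.smul_mem _ _ (Submodule.mem_span_singleton_self y),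
        x - (Φ x * ↑e⁻¹) • y, ?_, by abel⟩
      rw [LinearMap.mem_ker, map_sub, map_smul, smul_eq_mul]
      have : Φ y = ↑e := hUy.unit_spec.symm
      rw [this, mul_assoc, Units.inv_mul, mul_one, sub_self]
end
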